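/- arXiv:0909.5004 — 5 statements merged into one kernel-verified Lean document; each statement's English description precedes it below -/
import Mathlib

section
/- For a separable metric space X the following are equivalent: (1) X is a union of countably many compact finite-dimensional subsets and X is not itself both compact and finite-dimensional; (2) 1 < tp_{S₁(𝓞_kfd,𝓞)}(X) ≤ ω, i.e., TWO has a winning strategy in the ω-length game G₁^ω(𝓞_kfd,𝓞) on X but not in the 1-inning game G₁^1(𝓞_kfd,𝓞) on X. -/
open Set Topology

/-- The Lebesgue covering dimension of `X` is at most `n`: every finite open cover has an
open refinement, still covering `X`, in which every point lies in at most `n+1` members. -/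
def CovDimLE (X : Type*) [TopologicalSpace X] (n : ℕ) : Prop :=
  ∀ 𝓤 : Set (Set X), 𝓤.Finite → (∀ U ∈ 𝓤, IsOpen U) → ⋃₀ 𝓤 = Set.univ →
    ∃ 𝓥 : Set (Set X), (∀ V ∈ 𝓥, IsOpen V) ∧ ⋃₀ 𝓥 = Set.univ ∧
      (∀ V ∈ 𝓥, ∃ U ∈ 𝓤, V ⊆ U) ∧
      ∀ x : X, {V | V ∈ 𝓥 ∧ x ∈ V}.Finite ∧ {V | V ∈ 𝓥 ∧ x ∈ V}.ncard ≤ n + 1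

/-- `X` is finite dimensional. -/
def FinDim (X : Type*) [TopologicalSpace X] : Prop :=
  ∃ n : ℕ, CovDimLE X n

/-- The compact finite-dimensional subsets of `X` (as subspaces). -/
def kfdSets (X : Type*) [TopologicalSpace X] : Set (Set X) :=
  {T : Set X | IsCompact T ∧ FinDim T}

/-- The finite-dimensional subsets of `X` (as subspaces). -/
def fdSets (X : Type*) [TopologicalSpace X] : Set (Set X) :=
  {T : Set X | FinDim T}

/-- `X` is countable dimensional: a union of countably many zero-dimensional subsets. -/
def CountableDimensional (X : Type*) [TopologicalSpace X] : Prop :=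
  ∃ Z : ℕ → Set X, (∀ n, CovDimLE (Z n) 0) ∧ (⋃ n, Z n) = Set.univ

/-- `𝓤` is an open `𝓣`-cover of `X`. -/
def IsTCover {X : Type*} [TopologicalSpace X] (𝓣 𝓤 : Set (Set X)) : Prop :=
  (∀ U ∈ 𝓤, IsOpen U) ∧ (∀ x : X, ∃ U ∈ 𝓤, x ∈ U) ∧ ∀ T ∈ 𝓣, ∃ U ∈ 𝓤, T ⊆ U

/-- `𝓤` is an open cover of `X`. -/
def IsOpenCover {X : Type*} [TopologicalSpace X] (𝓤 : Set (Set X)) : Prop :=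
  (∀ U ∈ 𝓤, IsOpen U) ∧ ∀ x : X, ∃ U ∈ 𝓤, x ∈ U

/-- A strategy for TWO in the length-`α` game `G₁`: to each inning `γ < α` and each
history `(O_β : β ≤ γ)` of moves of ONE it assigns a response (a subset of `X`). -/
def TwoStrategy (X : Type*) (α : Ordinal.{0}) :=
  ∀ γ : Ordinal.{0}, γ < α → ((β : Ordinal.{0}) → β ≤ γ → Set (Set X)) → Set X

/-- The strategy `F` for TWO is winning in `G₁^α(𝓞(𝓣),𝓞)`: responses to legal histories are
elements of ONE's last move, and for every play of `𝓣`-covers by ONE the responses cover `X`. -/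
def IsWinningTwo {X : Type*} [TopologicalSpace X] (𝓣 : Set (Set X)) (α : Ordinal.{0})
    (F : TwoStrategy X α) : Prop :=
  (∀ (γ : Ordinal.{0}) (hγ : γ < α) (O : (β : Ordinal.{0}) → β ≤ γ → Set (Set X)),
      (∀ β hβ, IsTCover 𝓣 (O β hβ)) → F γ hγ O ∈ O γ le_rfl) ∧
  ∀ O : (γ : Ordinal.{0}) → γ < α → Set (Set X),
    (∀ γ hγ, IsTCover 𝓣 (O γ hγ)) →
    ∀ x : X, ∃ (γ : Ordinal.{0}) (hγ : γ < α),
      x ∈ F γ hγ (fun β hβ => O β (lt_of_le_of_lt hβ hγ))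

/-- TWO has a winning strategy in `G₁^α(𝓞(𝓣),𝓞)` on `X`. -/
def TwoWins (X : Type*) [TopologicalSpace X] (𝓣 : Set (Set X)) (α : Ordinal.{0}) : Prop :=
  ∃ F : TwoStrategy X α, IsWinningTwo 𝓣 α F

/-- `tp_{S₁(𝓞(𝓣),𝓞)}(X) = α`: TWO wins the length-`α` game but no shorter one. -/
def TPEq (X : Type*) [TopologicalSpace X] (𝓣 : Set (Set X)) (α : Ordinal.{0}) : Prop :=
  TwoWins X 𝓣 α ∧ ∀ β < α, ¬ TwoWins X 𝓣 β

/-- `tp_{S₁(𝓞(𝓣),𝓞)}(X) ≤ α`. -/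
def TPLe (X : Type*) [TopologicalSpace X] (𝓣 : Set (Set X)) (α : Ordinal.{0}) : Prop :=
  ∃ β ≤ α, TwoWins X 𝓣 β

/-- A strategy for TWO in the length-`α` game `G_c`. -/
def TwoStrategyC (X : Type*) (α : Ordinal.{0}) :=
  ∀ γ : Ordinal.{0}, γ < α → ((β : Ordinal.{0}) → β ≤ γ → Set (Set X)) → Set (Set X)

/-- The strategy `F` for TWO is winning in `G_c^α(𝓞,𝓞)`: to legal histories it responds with
pairwise disjoint families of open sets refining ONE's last move, and for every play of open
covers by ONE the union of the responses covers `X`. -/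
def IsWinningTwoC {X : Type*} [TopologicalSpace X] (α : Ordinal.{0})
    (F : TwoStrategyC X α) : Prop :=
  (∀ (γ : Ordinal.{0}) (hγ : γ < α) (O : (β : Ordinal.{0}) → β ≤ γ → Set (Set X)),
      (∀ β hβ, IsOpenCover (O β hβ)) →
        (∀ V ∈ F γ hγ O, IsOpen V) ∧ (F γ hγ O).Pairwise Disjoint ∧
          ∀ V ∈ F γ hγ O, ∃ U ∈ O γ le_rfl, V ⊆ U) ∧
  ∀ O : (γ : Ordinal.{0}) → γ < α → Set (Set X),
    (∀ γ hγ, IsOpenCover (O γ hγ)) →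
    ∀ x : X, ∃ (γ : Ordinal.{0}) (hγ : γ < α),
      ∃ V ∈ F γ hγ (fun β hβ => O β (lt_of_le_of_lt hβ hγ)), x ∈ V

/-- TWO has a winning strategy in `G_c^α(𝓞,𝓞)` on `X`. -/
def TwoWinsC (X : Type*) [TopologicalSpace X] (α : Ordinal.{0}) : Prop :=
  ∃ F : TwoStrategyC X α, IsWinningTwoC α F

/-- `tp_{S_c(𝓞,𝓞)}(X) = α`. -/
def TPCEq (X : Type*) [TopologicalSpace X] (α : Ordinal.{0}) : Prop :=
  TwoWinsC X α ∧ ∀ β < α, ¬ TwoWinsC X β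

/-- `tp_{S_c(𝓞,𝓞)}(X) ≤ α`. -/
def TPCLe (X : Type*) [TopologicalSpace X] (α : Ordinal.{0}) : Prop :=
  ∃ β ≤ α, TwoWinsC X β



/- ===================== auxiliary machinery ===================== -/

lemma covDimLE_homeomorph {Y Z : Type*} [TopologicalSpace Y] [TopologicalSpace Z]
    (e : Y ≃ₜ Z) {n : ℕ} (h : CovDimLE Y n) : CovDimLE Z n := by
  intro 𝓤 hfin hop hcov
  obtain ⟨𝓥, hVop, hVcov, hVref, hVpt⟩ :=
    h ((fun U => e ⁻¹' U) '' 𝓤) (hfin.image _)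
      (by rintro _ ⟨U, hU, rfl⟩; exact (hop U hU).preimage e.continuous)
      (by rw [sUnion_image, ← preimage_iUnion₂, ← sUnion_eq_biUnion, hcov, preimage_univ])
  have hinj : Function.Injective (fun V : Set Y => e.symm ⁻¹' V) :=
    Set.preimage_injective.mpr e.symm.surjective
  refine ⟨(fun V => e.symm ⁻¹' V) '' 𝓥, ?_, ?_, ?_, ?_⟩
  · rintro _ ⟨V, hV, rfl⟩; exact (hVop V hV).preimage e.symm.continuous
  · rw [sUnion_image, ← preimage_iUnion₂, ← sUnion_eq_biUnion, hVcov, preimage_univ]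
  · rintro _ ⟨V, hV, rfl⟩
    obtain ⟨_, ⟨U, hU, rfl⟩, hsub⟩ := hVref V hV
    refine ⟨U, hU, ?_⟩
    intro z hz
    have : e.symm z ∈ e ⁻¹' U := hsub hz
    simpa using this
  · intro z
    have hset : {V | V ∈ (fun V => e.symm ⁻¹' V) '' 𝓥 ∧ z ∈ V} =
        (fun V => e.symm ⁻¹' V) '' {V | V ∈ 𝓥 ∧ e.symm z ∈ V} := by
      ext W
      constructor
      · rintro ⟨⟨V, hV, rfl⟩, hz⟩; exact ⟨V, ⟨hV, hz⟩, rfl⟩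
      · rintro ⟨V, ⟨hV, hz⟩, rfl⟩; exact ⟨⟨V, hV, rfl⟩, hz⟩
    rw [hset]
    exact ⟨((hVpt (e.symm z)).1).image _,
      (Set.ncard_image_of_injective _ hinj) ▸ (hVpt (e.symm z)).2⟩

lemma covDimLE_subsingleton {Y : Type*} [TopologicalSpace Y] [Subsingleton Y] :
    CovDimLE Y 0 := by
  intro 𝓤 _ _ hcov
  by_cases hY : Nonempty Y
  · obtain ⟨y⟩ := hY
    obtain ⟨U, hU, hyU⟩ : y ∈ ⋃₀ 𝓤 := hcov ▸ mem_univ y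
    have hUuniv : U = univ := eq_univ_of_forall fun z => (Subsingleton.elim z y) ▸ hyU
    refine ⟨{univ}, ?_, ?_, ?_, ?_⟩
    · rintro V rfl; exact isOpen_univ
    · simp
    · rintro V rfl; exact ⟨U, hU, hUuniv ▸ subset_rfl⟩
    · intro x
      have : {V | V ∈ ({univ} : Set (Set Y)) ∧ x ∈ V} = {univ} := by
        ext V; simp (config := { contextual := true }) [mem_singleton_iff]
      rw [this]
      simp
  · refine ⟨∅, by simp, ?_, by simp, ?_⟩
    · rw [sUnion_empty, eq_comm, univ_eq_empty_iff]
      exact not_nonempty_iff.mp hY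
    · intro x; exact absurd ⟨x⟩ hY

noncomputable def myToNat (o : Ordinal.{0}) : ℕ :=
  if h : o < Ordinal.omega0 then (Ordinal.lt_omega0.mp h).choose else 0

lemma myToNat_cast (n : ℕ) : myToNat (n : Ordinal) = n := by
  have h : (n : Ordinal) < Ordinal.omega0 := Ordinal.nat_lt_omega0 n
  rw [myToNat, dif_pos h]
  have := (Ordinal.lt_omega0.mp h).choose_spec
  exact_mod_cast this.symm

open scoped Classical in
noncomputable def pickSet {X : Type*} (A : Set X) (𝓤 : Set (Set X)) : Set X :=
  if h : ∃ U ∈ 𝓤, A ⊆ U then h.choose else ∅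

open scoped Classical in
lemma pickSet_mem {X : Type*} {A : Set X} {𝓤 : Set (Set X)}
    (h : ∃ U ∈ 𝓤, A ⊆ U) : pickSet A 𝓤 ∈ 𝓤 := by
  rw [pickSet, dif_pos h]; exact h.choose_spec.1

open scoped Classical in
lemma pickSet_sub {X : Type*} {A : Set X} {𝓤 : Set (Set X)}
    (h : ∃ U ∈ 𝓤, A ⊆ U) : A ⊆ pickSet A 𝓤 := by
  rw [pickSet, dif_pos h]; exact h.choose_spec.2

lemma finDim_univ {X : Type*} [TopologicalSpace X] :
    FinDim (Set.univ : Set X) ↔ FinDim X :=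
  ⟨fun ⟨n, h⟩ => ⟨n, covDimLE_homeomorph (Homeomorph.Set.univ X) h⟩,
   fun ⟨n, h⟩ => ⟨n, covDimLE_homeomorph (Homeomorph.Set.univ X).symm h⟩⟩

lemma singleton_kfd {X : Type*} [MetricSpace X] (x : X) : {x} ∈ kfdSets X := by
  refine ⟨isCompact_singleton, 0, ?_⟩
  haveI : Subsingleton ({x} : Set X) :=
    ⟨fun a b => Subtype.ext ((mem_singleton_iff.mp a.2).trans (mem_singleton_iff.mp b.2).symm)⟩
  exact covDimLE_subsingleton

lemma kfd_superset_of_P {X : Type*} [MetricSpace X] {C : Set X}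
    (hP : ∀ 𝓤, IsTCover (kfdSets X) 𝓤 → ∃ U ∈ 𝓤, C ⊆ U) :
    ∃ K ∈ kfdSets X, C ⊆ K := by
  by_cases hA : ∀ x : X, ∃ U : Set X, IsOpen U ∧ x ∈ U ∧ ¬ C ⊆ U
  · have hnot : ¬ IsTCover (kfdSets X) {U : Set X | IsOpen U ∧ ¬ C ⊆ U} := by
      intro h
      obtain ⟨U, hU, hCU⟩ := hP _ h
      exact hU.2 hCU
    have hex : ∃ T ∈ kfdSets X, ∀ U : Set X, IsOpen U → ¬ C ⊆ U → ¬ T ⊆ U := by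
      by_contra hc
      push_neg at hc
      refine hnot ⟨fun U hU => hU.1, fun x => ?_, fun T hT => ?_⟩
      · obtain ⟨U, hU1, hU2, hU3⟩ := hA x
        exact ⟨U, ⟨hU1, hU3⟩, hU2⟩
      · obtain ⟨U, hU1, hU2, hU3⟩ := hc T hT
        exact ⟨U, ⟨hU1, hU2⟩, hU3⟩
    obtain ⟨T, hT, hTU⟩ := hex
    refine ⟨T, hT, fun z hz => ?_⟩
    by_contra hzT
    have hU : IsOpen ({z}ᶜ : Set X) := isClosed_singleton.isOpen_compl
    have hTsub : T ⊆ ({z}ᶜ : Set X) := fun w hw (he : w ∈ ({z} : Set X)) =>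
      hzT ((mem_singleton_iff.mp he) ▸ hw)
    by_cases hCz : C ⊆ ({z}ᶜ : Set X)
    · exact (hCz hz) rfl
    · exact hTU _ hU hCz hTsub
  · push_neg at hA
    obtain ⟨x, hx⟩ := hA
    refine ⟨{x}, singleton_kfd x, fun z hz => ?_⟩
    by_contra hzx
    have hxz : x ∈ ({z}ᶜ : Set X) := fun he =>
      hzx (mem_singleton_iff.mpr ((mem_singleton_iff.mp he).symm))
    exact (hx ({z}ᶜ) isClosed_singleton.isOpen_compl hxz) hz rfl

noncomputable def gResp {X : Type*} (F : TwoStrategy X Ordinal.omega0)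
    (O : ℕ → Set (Set X)) (k : ℕ) : Set X :=
  F (k : Ordinal) (Ordinal.nat_lt_omega0 k) (fun β _ => O (myToNat β))

open scoped Classical in
noncomputable def gQ {X : Type*} [TopologicalSpace X] (F : TwoStrategy X Ordinal.omega0)
    (B : Set (Set X)) (enum : ℕ → Set X) (P : ℕ → Set (Set X)) (k n : ℕ) :
    ℕ → Set (Set X) :=
  if h : ∃ U : Set (Set X), (IsTCover (kfdSets X) U ∧ U ⊆ B) ∧
      gResp F (Function.update P k U) k = enum n
  then Function.update P k h.choose else Function.update P k B

noncomputable def gH {X : Type*} [TopologicalSpace X] (F : TwoStrategy X Ordinal.omega0)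
    (B : Set (Set X)) (enum : ℕ → Set X) : List ℕ → ℕ → Set (Set X)
  | [] => fun _ => B
  | n :: t => gQ F B enum (gH F B enum t) t.length n

noncomputable def gC {X : Type*} [TopologicalSpace X] (F : TwoStrategy X Ordinal.omega0)
    (B : Set (Set X)) (enum : ℕ → Set X) (t : List ℕ) : Set X :=
  ⋂ U ∈ {U : Set (Set X) | IsTCover (kfdSets X) U ∧ U ⊆ B},
    gResp F (Function.update (gH F B enum t) t.length U) t.length

lemma gResp_congr {X : Type*} (F : TwoStrategy X Ordinal.omega0)
    {O O' : ℕ → Set (Set X)} {k : ℕ} (h : ∀ j ≤ k, O j = O' j) :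
    gResp F O k = gResp F O' k := by
  unfold gResp
  refine congrArg (F _ _) (funext fun β => funext fun hβ => ?_)
  obtain ⟨m, rfl⟩ := Ordinal.lt_omega0.mp (lt_of_le_of_lt hβ (Ordinal.nat_lt_omega0 k))
  rw [myToNat_cast]
  exact h m (by exact_mod_cast hβ)

lemma gResp_mem {X : Type*} [TopologicalSpace X] {F : TwoStrategy X Ordinal.omega0}
    (hF : IsWinningTwo (kfdSets X) Ordinal.omega0 F)
    {O : ℕ → Set (Set X)} (hO : ∀ n, IsTCover (kfdSets X) (O n)) (k : ℕ) :
    gResp F O k ∈ O k := by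
  have h := hF.1 (k : Ordinal) (Ordinal.nat_lt_omega0 k)
    (fun β _ => O (myToNat β)) (fun β hβ => hO _)
  have h2 : O (myToNat ((k : ℕ) : Ordinal)) = O k := by rw [myToNat_cast]
  exact h2 ▸ h

lemma gResp_cover {X : Type*} [TopologicalSpace X] {F : TwoStrategy X Ordinal.omega0}
    (hF : IsWinningTwo (kfdSets X) Ordinal.omega0 F)
    {O : ℕ → Set (Set X)} (hO : ∀ n, IsTCover (kfdSets X) (O n)) (x : X) :
    ∃ k : ℕ, x ∈ gResp F O k := by
  obtain ⟨γ, hγ, hx⟩ := hF.2 (fun γ _ => O (myToNat γ)) (fun γ hγ => hO _) x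
  obtain ⟨k, rfl⟩ := Ordinal.lt_omega0.mp hγ
  exact ⟨k, hx⟩

lemma gH_good {X : Type*} [TopologicalSpace X] {F : TwoStrategy X Ordinal.omega0}
    {B : Set (Set X)} (hB : IsTCover (kfdSets X) B) (enum : ℕ → Set X) :
    ∀ (t : List ℕ) (j : ℕ), IsTCover (kfdSets X) (gH F B enum t j) ∧ gH F B enum t j ⊆ B := by
  intro t
  induction t with
  | nil => intro j; exact ⟨hB, subset_rfl⟩
  | cons n t ih =>
    intro j
    have hrw : gH F B enum (n :: t) = gQ F B enum (gH F B enum t) t.length n := rfl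
    rw [hrw]
    unfold gQ
    split
    · rename_i h
      by_cases hj : j = t.length
      · subst hj; rw [Function.update_self]
        exact ⟨h.choose_spec.1.1, h.choose_spec.1.2⟩
      · rw [Function.update_of_ne hj]; exact ih j
    · by_cases hj : j = t.length
      · subst hj; rw [Function.update_self]; exact ⟨hB, subset_rfl⟩
      · rw [Function.update_of_ne hj]; exact ih j

lemma gH_cons_ne {X : Type*} [TopologicalSpace X] (F : TwoStrategy X Ordinal.omega0)
    (B : Set (Set X)) (enum : ℕ → Set X) {t : List ℕ} {n j : ℕ} (hj : j ≠ t.length) :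
    gH F B enum (n :: t) j = gH F B enum t j := by
  show gQ F B enum (gH F B enum t) t.length n j = _
  unfold gQ
  split <;> rw [Function.update_of_ne hj]

lemma gC_sub {X : Type*} [TopologicalSpace X] {F : TwoStrategy X Ordinal.omega0}
    {B : Set (Set X)} {enum : ℕ → Set X} {t : List ℕ} {W : Set (Set X)}
    (hW : IsTCover (kfdSets X) W ∧ W ⊆ B) :
    gC F B enum t ⊆ gResp F (Function.update (gH F B enum t) t.length W) t.length :=
  Set.biInter_subset_of_mem hW

lemma exists_kfd_decomposition {X : Type*} [MetricSpace X] [TopologicalSpace.SeparableSpace X]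
    (hwin : TwoWins X (kfdSets X) Ordinal.omega0) :
    ∃ f : ℕ → Set X, (∀ n, f n ∈ kfdSets X) ∧ (⋃ n, f n) = Set.univ := by
  haveI : SecondCountableTopology X := UniformSpace.secondCountable_of_separable X
  obtain ⟨F, hF⟩ := hwin
  set 𝓑 := TopologicalSpace.countableBasis X with h𝓑
  set B : Set (Set X) := {W | ∃ s : Set (Set X), s ⊆ 𝓑 ∧ s.Finite ∧ W = ⋃₀ s} with hBdef
  have hBopen : ∀ W ∈ B, IsOpen W := by
    rintro W ⟨s, hs1, hs2, rfl⟩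
    exact isOpen_sUnion fun b hb => TopologicalSpace.isOpen_of_mem_countableBasis (hs1 hb)
  have hBref : ∀ T U : Set X, IsCompact T → IsOpen U → T ⊆ U → ∃ W ∈ B, T ⊆ W ∧ W ⊆ U := by
    intro T U hT hU hTU
    have hcov : T ⊆ ⋃ i : {b : Set X // b ∈ 𝓑 ∧ b ⊆ U}, i.1 := by
      intro x hx
      obtain ⟨b, hb, hxb, hbU⟩ :=
        (TopologicalSpace.isBasis_countableBasis X).exists_subset_of_mem_open (hTU hx) hU
      exact mem_iUnion.mpr ⟨⟨b, hb, hbU⟩, hxb⟩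
    obtain ⟨tf, htf⟩ := hT.elim_finite_subcover
      (fun i : {b : Set X // b ∈ 𝓑 ∧ b ⊆ U} => i.1)
      (fun i => TopologicalSpace.isOpen_of_mem_countableBasis i.2.1) hcov
    refine ⟨⋃₀ ((fun i : {b : Set X // b ∈ 𝓑 ∧ b ⊆ U} => i.1) '' ↑tf),
      ⟨_, ?_, ?_, rfl⟩, ?_, ?_⟩
    · rintro _ ⟨i, _, rfl⟩; exact i.2.1
    · exact (tf.finite_toSet).image _
    · rw [sUnion_image]; exact htf
    · rw [sUnion_image]; exact iUnion₂_subset fun i _ => i.2.2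
  have hBcover : IsTCover (kfdSets X) B := by
    refine ⟨hBopen, ?_, ?_⟩
    · intro x
      obtain ⟨b, hb, hxb, _⟩ := (TopologicalSpace.isBasis_countableBasis X).exists_subset_of_mem_open
        (mem_univ x) isOpen_univ
      exact ⟨b, ⟨{b}, by simpa using hb, finite_singleton b, (sUnion_singleton b).symm⟩, hxb⟩
    · intro T hT
      obtain ⟨W, hW, hTW, _⟩ := hBref T univ hT.1 isOpen_univ (subset_univ T)
      exact ⟨W, hW, hTW⟩
  have hBcount : B.Countable := by
    have him : B ⊆ (fun s => ⋃₀ s) '' {s : Set (Set X) | s.Finite ∧ s ⊆ 𝓑} := by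
      rintro W ⟨s, hs1, hs2, rfl⟩; exact ⟨s, ⟨hs2, hs1⟩, rfl⟩
    exact Set.Countable.mono him
      ((Set.countable_setOf_finite_subset (TopologicalSpace.countable_countableBasis X)).image _)
  have hBne : B.Nonempty := ⟨∅, ∅, empty_subset _, finite_empty, (sUnion_empty).symm⟩
  obtain ⟨enum, henum⟩ := hBcount.exists_eq_range hBne
  have hRef : ∀ 𝓥, IsTCover (kfdSets X) 𝓥 →
      (IsTCover (kfdSets X) {W | W ∈ B ∧ ∃ V ∈ 𝓥, W ⊆ V} ∧
        {W | W ∈ B ∧ ∃ V ∈ 𝓥, W ⊆ V} ⊆ B) := by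
    intro 𝓥 h𝓥
    refine ⟨⟨fun W hW => hBopen W hW.1, ?_, ?_⟩, fun W hW => hW.1⟩
    · intro x
      obtain ⟨V, hV, hxV⟩ := h𝓥.2.1 x
      obtain ⟨b, hb, hxb, hbV⟩ :=
        (TopologicalSpace.isBasis_countableBasis X).exists_subset_of_mem_open hxV (h𝓥.1 V hV)
      exact ⟨b, ⟨⟨{b}, by simpa using hb, finite_singleton b, (sUnion_singleton b).symm⟩,
        V, hV, hbV⟩, hxb⟩
    · intro T hT
      obtain ⟨V, hV, hTV⟩ := h𝓥.2.2 T hT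
      obtain ⟨W, hWB, hTW, hWV⟩ := hBref T V hT.1 (h𝓥.1 V hV) hTV
      exact ⟨W, ⟨hWB, V, hV, hWV⟩, hTW⟩
  have hCP : ∀ t : List ℕ, ∀ 𝓥, IsTCover (kfdSets X) 𝓥 → ∃ V ∈ 𝓥, gC F B enum t ⊆ V := by
    intro t 𝓥 h𝓥
    obtain ⟨hWc, hWB⟩ := hRef 𝓥 h𝓥
    have hP'good : ∀ j, IsTCover (kfdSets X)
        (Function.update (gH F B enum t) t.length {W | W ∈ B ∧ ∃ V ∈ 𝓥, W ⊆ V} j) := by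
      intro j
      by_cases hj : j = t.length
      · subst hj; rw [Function.update_self]; exact hWc
      · rw [Function.update_of_ne hj]; exact (gH_good hBcover enum t j).1
    have hr := gResp_mem hF hP'good t.length
    rw [Function.update_self] at hr
    obtain ⟨_, V, hV, hrV⟩ := hr
    exact ⟨V, hV, (gC_sub ⟨hWc, hWB⟩).trans hrV⟩
  have hcov : ∀ x : X, ∃ t : List ℕ, x ∈ gC F B enum t := by
    intro x
    by_contra hx
    push_neg at hx
    have hpick : ∀ s : List ℕ, ∃ n : ℕ, (∃ U : Set (Set X),
        (IsTCover (kfdSets X) U ∧ U ⊆ B) ∧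
        gResp F (Function.update (gH F B enum s) s.length U) s.length = enum n) ∧
        x ∉ enum n := by
      intro s
      have hxs := hx s
      simp only [gC, mem_iInter, not_forall] at hxs
      obtain ⟨U, hU, hxU⟩ := hxs
      have hgood : ∀ j, IsTCover (kfdSets X)
          (Function.update (gH F B enum s) s.length U j) := by
        intro j
        by_cases hj : j = s.length
        · subst hj; rw [Function.update_self]; exact hU.1
        · rw [Function.update_of_ne hj]; exact (gH_good hBcover enum s j).1
      have hrmem := gResp_mem hF hgood s.length
      rw [Function.update_self] at hrmem
      have hrB : gResp F (Function.update (gH F B enum s) s.length U) s.length ∈ range enum :=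
        henum ▸ hU.2 hrmem
      obtain ⟨n, hn⟩ := hrB
      exact ⟨n, ⟨U, hU, hn.symm⟩, by rw [hn]; exact hxU⟩
    choose pick pickEx pickNot using hpick
    set t : ℕ → List ℕ := fun k => Nat.rec [] (fun _ ih => pick ih :: ih) k with ht
    have htsucc : ∀ k, t (k + 1) = pick (t k) :: t k := fun k => rfl
    have htlen : ∀ k, (t k).length = k := by
      intro k
      induction k with
      | zero => rfl
      | succ k ih => rw [htsucc, List.length_cons, ih]
    have hkey : ∀ k, (∀ j, j ≠ k → gH F B enum (t (k + 1)) j = gH F B enum (t k) j) ∧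
        gResp F (gH F B enum (t (k + 1))) k = enum (pick (t k)) := by
      intro k
      constructor
      · intro j hj
        rw [htsucc]
        exact gH_cons_ne F B enum (by rw [htlen]; exact hj)
      · have hex : ∃ U : Set (Set X), (IsTCover (kfdSets X) U ∧ U ⊆ B) ∧
            gResp F (Function.update (gH F B enum (t k)) (t k).length U) (t k).length
              = enum (pick (t k)) := pickEx (t k)
        have hgQ : gH F B enum (t (k + 1)) =
            Function.update (gH F B enum (t k)) (t k).length hex.choose := by
          rw [htsucc]
          show gQ F B enum (gH F B enum (t k)) (t k).length (pick (t k)) = _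
          unfold gQ
          rw [dif_pos hex]
        rw [hgQ]
        have hsp := hex.choose_spec.2
        revert hsp
        generalize hex.choose = U0
        intro hsp
        rw [htlen k] at hsp ⊢
        exact hsp
    set O : ℕ → Set (Set X) := fun j => gH F B enum (t (j + 1)) j with hO
    have hOgood : ∀ j, IsTCover (kfdSets X) (O j) := fun j => (gH_good hBcover enum _ j).1
    have hOpre : ∀ k, ∀ j ≤ k, O j = gH F B enum (t (k + 1)) j := by
      intro k
      induction k with
      | zero =>
        intro j hj
        have : j = 0 := Nat.le_zero.mp hj
        subst this; rfl
      | succ k ih =>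
        intro j hj
        by_cases hj2 : j = k + 1
        · subst hj2; rfl
        · have hjk : j ≤ k := Nat.lt_succ_iff.mp (lt_of_le_of_ne hj hj2)
          rw [ih j hjk]
          exact ((hkey (k + 1)).1 j hj2).symm
    have hnr : ∀ k, x ∉ gResp F O k := by
      intro k hmem
      have heq : gResp F O k = gResp F (gH F B enum (t (k + 1))) k :=
        gResp_congr F (fun j hj => hOpre k j hj)
      rw [heq, (hkey k).2] at hmem
      exact pickNot (t k) hmem
    obtain ⟨k, hk⟩ := gResp_cover hF hOgood x
    exact hnr k hk
  have hK : ∀ t : List ℕ, ∃ K ∈ kfdSets X, gC F B enum t ⊆ K :=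
    fun t => kfd_superset_of_P (hCP t)
  choose K hK1 hK2 using hK
  refine ⟨fun n => K ((Denumerable.eqv (List ℕ)).symm n), fun n => hK1 _, ?_⟩
  apply eq_univ_of_forall
  intro x
  obtain ⟨t, hxt⟩ := hcov x
  refine mem_iUnion.mpr ⟨(Denumerable.eqv (List ℕ)) t, ?_⟩
  simpa [Equiv.symm_apply_apply] using hK2 t hxt

theorem statement_2 {X : Type*} [MetricSpace X] [TopologicalSpace.SeparableSpace X] :
    ((∃ f : ℕ → Set X, (∀ n, f n ∈ kfdSets X) ∧ (⋃ n, f n) = Set.univ) ∧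
      ¬ (CompactSpace X ∧ FinDim X)) ↔
    (TwoWins X (kfdSets X) Ordinal.omega0 ∧ ¬ TwoWins X (kfdSets X) 1) := by
  constructor
  · rintro ⟨⟨f, hf, hfU⟩, hnc⟩
    constructor
    · -- TWO wins the ω-game
      refine ⟨fun γ hγ O => pickSet (f (myToNat γ)) (O γ le_rfl), ?_, ?_⟩
      · intro γ hγ O hO
        exact pickSet_mem ((hO γ le_rfl).2.2 _ (hf _))
      · intro O hO x
        obtain ⟨n, hxn⟩ := mem_iUnion.mp (hfU ▸ mem_univ x)
        refine ⟨(n : Ordinal), Ordinal.nat_lt_omega0 n, ?_⟩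
        have h : ∃ U ∈ O (n : Ordinal)
            (lt_of_le_of_lt le_rfl (Ordinal.nat_lt_omega0 n)),
            f (myToNat (n : Ordinal)) ⊆ U := (hO _ _).2.2 _ (hf _)
        exact pickSet_sub h (by rw [myToNat_cast]; exact hxn)
    · -- TWO does not win the 1-inning game
      rintro ⟨F, hF1, hF2⟩
      have hX2 : ∃ a b : X, a ≠ b := by
        by_contra h
        push_neg at h
        haveI : Subsingleton X := ⟨h⟩
        haveI : Finite X := Finite.of_subsingleton
        exact hnc ⟨inferInstance, ⟨0, covDimLE_subsingleton⟩⟩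
      have hcover : IsTCover (kfdSets X) {U : Set X | ∃ x : X, U = {x}ᶜ} := by
        refine ⟨?_, ?_, ?_⟩
        · rintro U ⟨x, rfl⟩; exact isClosed_singleton.isOpen_compl
        · intro x
          obtain ⟨a, b, hab⟩ := hX2
          by_cases h : x = a
          · exact ⟨({b}ᶜ : Set X), ⟨b, rfl⟩, fun he => hab ((h ▸ mem_singleton_iff.mp he) ▸ rfl)⟩
          · exact ⟨({a}ᶜ : Set X), ⟨a, rfl⟩, fun he => h (mem_singleton_iff.mp he)⟩
        · intro T hT
          have hTne : T ≠ univ := by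
            rintro rfl
            exact hnc ⟨isCompact_univ_iff.mp hT.1, finDim_univ.mp hT.2⟩
          obtain ⟨x, hx⟩ : ∃ x, x ∉ T := by
            by_contra h
            push_neg at h
            exact hTne (eq_univ_of_forall h)
          exact ⟨({x}ᶜ : Set X), ⟨x, rfl⟩,
            fun w hw (he : w ∈ ({x} : Set X)) => hx ((mem_singleton_iff.mp he) ▸ hw)⟩
      have hmem := hF1 0 zero_lt_one (fun _ _ => {U : Set X | ∃ x : X, U = {x}ᶜ})
        (fun _ _ => hcover)
      obtain ⟨y, hy⟩ := hmem
      obtain ⟨γ, hγ, hxy⟩ := hF2 (fun _ _ => {U : Set X | ∃ x : X, U = {x}ᶜ})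
        (fun _ _ => hcover) y
      have hγ0 : γ = 0 := Ordinal.lt_one_iff_zero.mp hγ
      subst hγ0
      have hxy' : y ∈ F 0 zero_lt_one (fun _ _ => {U : Set X | ∃ x : X, U = {x}ᶜ}) := hxy
      rw [hy] at hxy'
      exact hxy' rfl
  · rintro ⟨hwin, hnot1⟩
    refine ⟨exists_kfd_decomposition hwin, ?_⟩
    rintro ⟨hc, hfd⟩
    apply hnot1
    have huniv : (univ : Set X) ∈ kfdSets X := ⟨isCompact_univ, finDim_univ.mpr hfd⟩
    refine ⟨fun γ hγ O => pickSet (univ : Set X) (O γ le_rfl), ?_, ?_⟩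
    · intro γ hγ O hO
      exact pickSet_mem ((hO γ le_rfl).2.2 _ huniv)
    · intro O hO x
      refine ⟨0, zero_lt_one, ?_⟩
      have h : ∃ U ∈ O 0 (lt_of_le_of_lt le_rfl zero_lt_one), (univ : Set X) ⊆ U :=
        (hO 0 _).2.2 _ huniv
      exact pickSet_sub h (mem_univ x)
end

section
/- Let X be a separable metric space which is not both compact and finite-dimensional, and suppose tp_{S₁(𝓞_kfd,𝓞)}(X) = k is finite. Then there is a nonempty compact finite-dimensional set C ⊆ X such that for every open set U ⊇ C one has tp_{S₁(𝓞_kfd,𝓞)}(X \ U) ≤ k − 1, and for some open set U ⊇ C one has tp_{S₁(𝓞_kfd,𝓞)}(X \ U) = k − 1. -/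
open Set Topology

section Dim
variable {X : Type*} [TopologicalSpace X]

lemma covDimLE_of_subsingleton (Z : Type*) [TopologicalSpace Z] [Subsingleton Z] :
    CovDimLE Z 0 := by
  intro 𝓤 _ _ hcov
  rcases isEmpty_or_nonempty Z with hZ | ⟨⟨z⟩⟩
  · refine ⟨∅, by simp, ?_, by simp, fun x => (IsEmpty.false x).elim⟩
    ext x; exact (IsEmpty.false x).elim
  · have : z ∈ ⋃₀ 𝓤 := hcov ▸ mem_univ z
    obtain ⟨U, hU, hz⟩ := this
    refine ⟨{U}, by simpa using fun h => hz ▸ trivial, ?_, ?_, fun x => ?_⟩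
    · ext x; simp only [sUnion_singleton, mem_univ, iff_true]
      rwa [Subsingleton.elim x z]
    · intro V hV; exact ⟨U, hU, by simp_all⟩
    · constructor
      · exact (Set.finite_singleton U).subset (fun V hV => hV.1)
      · calc ({V | V ∈ ({U} : Set (Set Z)) ∧ x ∈ V}).ncard ≤ ({U} : Set (Set Z)).ncard :=
              Set.ncard_le_ncard (fun V hV => hV.1) (Set.finite_singleton U)
          _ ≤ 1 := by simp

lemma finDim_of_subsingleton (Z : Type*) [TopologicalSpace Z] [Subsingleton Z] : FinDim Z :=
  ⟨0, covDimLE_of_subsingleton Z⟩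

lemma covDimLE_of_homeomorph {Z W : Type*} [TopologicalSpace Z] [TopologicalSpace W]
    (e : Z ≃ₜ W) {n : ℕ} (h : CovDimLE Z n) : CovDimLE W n := by
  intro 𝓤 hfin hopen hcov
  obtain ⟨𝓥, hVo, hVcov, hVref, hVpt⟩ :=
    h ((e ⁻¹' ·) '' 𝓤) (hfin.image _)
      (by rintro _ ⟨U, hU, rfl⟩; exact (hopen U hU).preimage e.continuous)
      (by ext z; simp only [mem_univ, iff_true, mem_sUnion]
          have : e z ∈ ⋃₀ 𝓤 := hcov ▸ mem_univ _
          obtain ⟨U, hU, hz⟩ := this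
          exact ⟨e ⁻¹' U, ⟨U, hU, rfl⟩, hz⟩)
  refine ⟨(e.symm ⁻¹' ·) '' 𝓥, ?_, ?_, ?_, ?_⟩
  · rintro _ ⟨V, hV, rfl⟩; exact (hVo V hV).preimage e.symm.continuous
  · ext w; simp only [mem_univ, iff_true, mem_sUnion]
    have : e.symm w ∈ ⋃₀ 𝓥 := hVcov ▸ mem_univ _
    obtain ⟨V, hV, hz⟩ := this
    exact ⟨e.symm ⁻¹' V, ⟨V, hV, rfl⟩, hz⟩
  · rintro _ ⟨V, hV, rfl⟩
    obtain ⟨_, ⟨U, hU, rfl⟩, hVU⟩ := hVref V hV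
    refine ⟨U, hU, ?_⟩
    intro w hw
    have := hVU hw
    simpa using this
  · intro w
    have hsub : {V | V ∈ (e.symm ⁻¹' ·) '' 𝓥 ∧ w ∈ V} ⊆
        (e.symm ⁻¹' ·) '' {V | V ∈ 𝓥 ∧ e.symm w ∈ V} := by
      rintro _ ⟨⟨V, hV, rfl⟩, hw⟩
      exact ⟨V, ⟨hV, hw⟩, rfl⟩
    have hfin' := ((hVpt (e.symm w)).1.image (e.symm ⁻¹' ·))
    constructor
    · exact hfin'.subset hsub
    · calc ({V | V ∈ (e.symm ⁻¹' ·) '' 𝓥 ∧ w ∈ V}).ncard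
          ≤ ((e.symm ⁻¹' ·) '' {V | V ∈ 𝓥 ∧ e.symm w ∈ V}).ncard :=
            Set.ncard_le_ncard hsub hfin'
        _ ≤ ({V | V ∈ 𝓥 ∧ e.symm w ∈ V}).ncard := Set.ncard_image_le (hVpt (e.symm w)).1
        _ ≤ n + 1 := (hVpt (e.symm w)).2

lemma finDim_of_homeomorph {Z W : Type*} [TopologicalSpace Z] [TopologicalSpace W]
    (e : Z ≃ₜ W) (h : FinDim Z) : FinDim W :=
  ⟨h.choose, covDimLE_of_homeomorph e h.choose_spec⟩

lemma covDimLE_closed_subtype {Z : Type*} [TopologicalSpace Z] {F : Set Z} (hF : IsClosed F)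
    {n : ℕ} (h : CovDimLE Z n) : CovDimLE ↥F n := by
  classical
  intro 𝓤 hfin hopen hcov
  have hext : ∀ U ∈ 𝓤, ∃ W : Set Z, IsOpen W ∧ Subtype.val ⁻¹' W = U := by
    intro U hU
    obtain ⟨W, hW, hWU⟩ := isOpen_induced_iff.mp (hopen U hU)
    exact ⟨W, hW, hWU⟩
  set ext : Set ↥F → Set Z := fun U =>
    if h : ∃ W : Set Z, IsOpen W ∧ Subtype.val ⁻¹' W = U then h.choose else ∅ with hextdef
  have hext1 : ∀ U ∈ 𝓤, IsOpen (ext U) ∧ Subtype.val ⁻¹' (ext U) = U := by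
    intro U hU
    have h' := hext U hU
    simp only [hextdef, dif_pos h']
    exact h'.choose_spec
  obtain ⟨𝓥, hVo, hVcov, hVref, hVpt⟩ :=
    h (insert Fᶜ (ext '' 𝓤)) ((hfin.image _).insert _)
      (by rintro W hW
          rcases hW with rfl | ⟨U, hU, rfl⟩
          · exact hF.isOpen_compl
          · exact (hext1 U hU).1)
      (by ext z; simp only [mem_univ, iff_true, mem_sUnion]
          by_cases hz : z ∈ F
          · have : (⟨z, hz⟩ : ↥F) ∈ ⋃₀ 𝓤 := hcov ▸ mem_univ _
            obtain ⟨U, hU, hm⟩ := this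
            refine ⟨ext U, Or.inr ⟨U, hU, rfl⟩, ?_⟩
            have := (hext1 U hU).2
            rw [← this] at hm; exact hm
          · exact ⟨Fᶜ, Or.inl rfl, hz⟩)
  set r : Set Z → Set ↥F := fun V => Subtype.val ⁻¹' V with hrdef
  refine ⟨r '' {V | V ∈ 𝓥 ∧ ∃ U ∈ 𝓤, r V ⊆ U}, ?_, ?_, ?_, ?_⟩
  · rintro _ ⟨V, ⟨hV, _⟩, rfl⟩
    exact (hVo V hV).preimage continuous_subtype_val
  · ext x; simp only [mem_univ, iff_true, mem_sUnion]
    have : (x : Z) ∈ ⋃₀ 𝓥 := hVcov ▸ mem_univ _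
    obtain ⟨V, hV, hm⟩ := this
    obtain ⟨W, hW, hVW⟩ := hVref V hV
    rcases hW with rfl | ⟨U, hU, rfl⟩
    · exact absurd (hVW hm) (by simp [x.2])
    · refine ⟨r V, ⟨V, ⟨hV, ⟨U, hU, ?_⟩⟩, rfl⟩, hm⟩
      intro y hy
      have : (y : Z) ∈ ext U := hVW hy
      rw [← (hext1 U hU).2]; exact this
  · rintro _ ⟨V, ⟨_, hU⟩, rfl⟩; exact hU
  · intro x
    have hsub : {V' | V' ∈ r '' {V | V ∈ 𝓥 ∧ ∃ U ∈ 𝓤, r V ⊆ U} ∧ x ∈ V'} ⊆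
        r '' {V | V ∈ 𝓥 ∧ (x : Z) ∈ V} := by
      rintro _ ⟨⟨V, ⟨hV, _⟩, rfl⟩, hx⟩
      exact ⟨V, ⟨hV, hx⟩, rfl⟩
    have hfin' := (hVpt (x : Z)).1.image r
    refine ⟨hfin'.subset hsub, ?_⟩
    calc _ ≤ (r '' {V | V ∈ 𝓥 ∧ (x : Z) ∈ V}).ncard := Set.ncard_le_ncard hsub hfin'
      _ ≤ ({V | V ∈ 𝓥 ∧ (x : Z) ∈ V}).ncard := Set.ncard_image_le (hVpt (x : Z)).1
      _ ≤ n + 1 := (hVpt (x : Z)).2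

lemma finDim_closed_subtype {Z : Type*} [TopologicalSpace Z] {F : Set Z} (hF : IsClosed F)
    (h : FinDim Z) : FinDim ↥F :=
  ⟨h.choose, covDimLE_closed_subtype hF h.choose_spec⟩

lemma mem_of_mem_image_val {A : Set X} {s : Set ↥A} {y : X}
    (hy : y ∈ (Subtype.val '' s : Set X)) : y ∈ A := by
  obtain ⟨b, _, he⟩ := hy; exact he ▸ b.2

lemma mk_mem_of_mem_image_val {A : Set X} {s : Set ↥A} {y : X}
    (hy : y ∈ (Subtype.val '' s : Set X)) (h : y ∈ A) : (⟨y, h⟩ : ↥A) ∈ s := by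
  obtain ⟨b, hb, he⟩ := hy
  rwa [show (⟨y, h⟩ : ↥A) = b from Subtype.ext he.symm]

/-- The canonical homeomorphism between a subset of a subspace and its image in the
ambient space. -/
noncomputable def valImageHomeo {A : Set X} (s : Set ↥A) :
    ↥s ≃ₜ ↥(Subtype.val '' s : Set X) where
  toFun x := ⟨(x : ↥A), ⟨x, x.2, rfl⟩⟩
  invFun y := ⟨⟨(y : X), mem_of_mem_image_val y.2⟩, mk_mem_of_mem_image_val y.2 _⟩
  left_inv x := Subtype.ext (Subtype.ext rfl)
  right_inv y := Subtype.ext rfl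
  continuous_toFun := Continuous.subtype_mk (continuous_subtype_val.comp continuous_subtype_val) _
  continuous_invFun := Continuous.subtype_mk (Continuous.subtype_mk continuous_subtype_val _) _

end Dim

section Kfd
variable {X : Type*} [TopologicalSpace X]

lemma empty_mem_kfdSets : (∅ : Set X) ∈ kfdSets X := by
  refine ⟨isCompact_empty, ?_⟩
  haveI : IsEmpty ↥(∅ : Set X) := by simp
  exact finDim_of_subsingleton _

lemma singleton_mem_kfdSets (x : X) : ({x} : Set X) ∈ kfdSets X := by
  refine ⟨isCompact_singleton, ?_⟩
  haveI : Subsingleton ↥({x} : Set X) := by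
    exact (Set.subsingleton_coe _).mpr Set.subsingleton_singleton
  exact finDim_of_subsingleton _

lemma kfd_image_val {A : Set X} {s : Set ↥A} (hs : s ∈ kfdSets ↥A) :
    (Subtype.val '' s : Set X) ∈ kfdSets X :=
  ⟨hs.1.image continuous_subtype_val, finDim_of_homeomorph (valImageHomeo s) hs.2⟩

lemma kfd_preimage_val {Y : Set X} (hY : IsClosed Y) {T : Set X} (hT : T ∈ kfdSets X) :
    (Subtype.val ⁻¹' T : Set ↥Y) ∈ kfdSets ↥Y := by
  have himg : (Subtype.val '' (Subtype.val ⁻¹' T : Set ↥Y) : Set X) = Y ∩ T :=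
    Subtype.image_preimage_coe _ _
  constructor
  · rw [Subtype.isCompact_iff, himg]
    exact hT.1.inter_left hY
  · have h1 : FinDim ↥(Subtype.val ⁻¹' Y : Set ↥T) :=
      finDim_closed_subtype (hY.preimage continuous_subtype_val) hT.2
    have h2 : FinDim ↥(Subtype.val '' (Subtype.val ⁻¹' Y : Set ↥T) : Set X) :=
      finDim_of_homeomorph (valImageHomeo _) h1
    have he : (Subtype.val '' (Subtype.val ⁻¹' Y : Set ↥T) : Set X) = T ∩ Y :=
      Subtype.image_preimage_coe _ _
    rw [he] at h2
    exact finDim_of_homeomorph (valImageHomeo _).symm (by rw [himg, inter_comm]; exact h2)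

lemma IsTCover.nonempty' {𝓤 : Set (Set X)} (h : IsTCover (kfdSets X) 𝓤) : ∃ U, U ∈ 𝓤 := by
  obtain ⟨U, hU, _⟩ := h.2.2 ∅ empty_mem_kfdSets; exact ⟨U, hU⟩

lemma restrict_TCover (Y : Set X) {O : Set (Set X)} (hO : IsTCover (kfdSets X) O) :
    IsTCover (kfdSets ↥Y) ((fun V => (Subtype.val ⁻¹' V : Set ↥Y)) '' O) := by
  refine ⟨?_, ?_, ?_⟩
  · rintro _ ⟨V, hV, rfl⟩; exact (hO.1 V hV).preimage continuous_subtype_val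
  · intro x; obtain ⟨U, hU, hx⟩ := hO.2.1 (x : X); exact ⟨_, ⟨U, hU, rfl⟩, hx⟩
  · intro S hS
    obtain ⟨U, hU, hTU⟩ := hO.2.2 _ (kfd_image_val hS)
    refine ⟨_, ⟨U, hU, rfl⟩, fun y hy => hTU ⟨y, hy, rfl⟩⟩

open Classical in
/-- A chosen open extension of an open set of a subspace. -/
noncomputable def extOpen (Y : Set X) (V : Set ↥Y) : Set X :=
  if h : ∃ W : Set X, IsOpen W ∧ (Subtype.val ⁻¹' W : Set ↥Y) = V then h.choose else ∅

lemma extOpen_spec {Y : Set X} {V : Set ↥Y} (hV : IsOpen V) :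
    IsOpen (extOpen Y V) ∧ (Subtype.val ⁻¹' (extOpen Y V) : Set ↥Y) = V := by
  have h : ∃ W : Set X, IsOpen W ∧ (Subtype.val ⁻¹' W : Set ↥Y) = V := by
    obtain ⟨W, hW, hWV⟩ := isOpen_induced_iff.mp hV
    exact ⟨W, hW, hWV⟩
  rw [extOpen, dif_pos h]
  exact h.choose_spec

/-- Lift an open set of the subspace `Uᶜ` to an open subset of `X` by adding `U`. -/
noncomputable def liftSet (U : Set X) (V : Set ↥(Uᶜ)) : Set X := extOpen Uᶜ V ∪ U

lemma liftSet_isOpen {U : Set X} {V : Set ↥(Uᶜ)} (hU : IsOpen U) (hV : IsOpen V) :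
    IsOpen (liftSet U V) := ((extOpen_spec hV).1).union hU

lemma mem_liftSet_of {U : Set X} {V : Set ↥(Uᶜ)} (hV : IsOpen V) {x : X} (hx : x ∉ U)
    (hxV : (⟨x, hx⟩ : ↥(Uᶜ)) ∈ V) : x ∈ liftSet U V := by
  left
  have := (extOpen_spec hV).2
  rw [← this] at hxV
  exact hxV

lemma of_mem_liftSet {U : Set X} {V : Set ↥(Uᶜ)} (hV : IsOpen V) {x : X}
    (hx : x ∈ liftSet U V) (hxU : x ∉ U) : (⟨x, hxU⟩ : ↥(Uᶜ)) ∈ V := by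
  rcases hx with hx | hx
  · rw [← (extOpen_spec hV).2]; exact hx
  · exact absurd hx hxU

lemma lift_TCover {U : Set X} (hU : IsOpen U) {O' : Set (Set ↥(Uᶜ))}
    (hO' : IsTCover (kfdSets ↥(Uᶜ)) O') : IsTCover (kfdSets X) (liftSet U '' O') := by
  refine ⟨?_, ?_, ?_⟩
  · rintro _ ⟨V, hV, rfl⟩; exact liftSet_isOpen hU (hO'.1 V hV)
  · intro x
    by_cases hx : x ∈ U
    · obtain ⟨V₀, hV₀⟩ := hO'.nonempty'
      exact ⟨_, ⟨V₀, hV₀, rfl⟩, Or.inr hx⟩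
    · obtain ⟨V, hV, hxV⟩ := hO'.2.1 ⟨x, hx⟩
      exact ⟨_, ⟨V, hV, rfl⟩, mem_liftSet_of (hO'.1 V hV) hx hxV⟩
  · intro T hT
    obtain ⟨V, hV, hTV⟩ := hO'.2.2 _ (kfd_preimage_val hU.isClosed_compl hT)
    refine ⟨_, ⟨V, hV, rfl⟩, fun x hx => ?_⟩
    by_cases hxU : x ∈ U
    · exact Or.inr hxU
    · exact mem_liftSet_of (hO'.1 V hV) hxU (hTV hx)

end Kfd

section Ord

/-- Convert a finite ordinal to a natural number. -/
noncomputable def ordToNat (γ : Ordinal.{0}) : ℕ :=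
  if h : γ < Ordinal.omega0 then (Ordinal.lt_omega0.mp h).choose else 0

lemma ordToNat_eq {γ : Ordinal.{0}} (h : γ < Ordinal.omega0) : γ = (ordToNat γ : Ordinal.{0}) := by
  rw [ordToNat, dif_pos h]; exact (Ordinal.lt_omega0.mp h).choose_spec

lemma ordToNat_cast (m : ℕ) : ordToNat (m : Ordinal.{0}) = m := by
  have := ordToNat_eq (Ordinal.nat_lt_omega0 m)
  exact_mod_cast this.symm

lemma ordToNat_lt {γ : Ordinal.{0}} {k : ℕ} (h : γ < (k : Ordinal.{0})) :
    ordToNat γ < k ∧ γ = (ordToNat γ : Ordinal.{0}) := by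
  have he := ordToNat_eq (h.trans (Ordinal.nat_lt_omega0 k))
  refine ⟨?_, he⟩
  rw [he] at h
  exact_mod_cast h

end Ord

lemma exists_nat_lt_of_lt_natCast {γ : Ordinal.{0}} {k : ℕ} (h : γ < (k : Ordinal.{0})) :
    ∃ n : ℕ, n < k ∧ γ = (n : Ordinal.{0}) :=
  ⟨ordToNat γ, (ordToNat_lt h).1, (ordToNat_lt h).2⟩

section Game
variable {X : Type*} [TopologicalSpace X]

lemma hist_congr {A : Type*} {γ : Ordinal.{0}} (H : ∀ β : Ordinal.{0}, β ≤ γ → A)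
    {β₁ β₂ : Ordinal.{0}} (h : β₁ = β₂) {h₁ : β₁ ≤ γ} {h₂ : β₂ ≤ γ} : H β₁ h₁ = H β₂ h₂ := by
  subst h; rfl

lemma play_congr {A : Type*} {α : Ordinal.{0}} (O : ∀ β : Ordinal.{0}, β < α → A)
    {β₁ β₂ : Ordinal.{0}} (h : β₁ = β₂) {h₁ : β₁ < α} {h₂ : β₂ < α} : O β₁ h₁ = O β₂ h₂ := by
  subst h; rfl

lemma strat_congr {α : Ordinal.{0}} (F : TwoStrategy X α) {γ₁ γ₂ : Ordinal.{0}} (h : γ₁ = γ₂)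
    (h₁ : γ₁ < α) (h₂ : γ₂ < α) (H₁ : ∀ β : Ordinal.{0}, β ≤ γ₁ → Set (Set X))
    (H₂ : ∀ β : Ordinal.{0}, β ≤ γ₂ → Set (Set X))
    (hH : ∀ β hβ₁ hβ₂, H₁ β hβ₁ = H₂ β hβ₂) : F γ₁ h₁ H₁ = F γ₂ h₂ H₂ := by
  subst h
  exact congrArg _ (funext fun β => funext fun hβ => hH β hβ hβ)

lemma strat_eval_zero {α : Ordinal.{0}} (F : TwoStrategy X α) (h0 : (0:Ordinal.{0}) < α)
    (O_U : Set (Set X)) {γ : Ordinal.{0}} (hγ : γ < α)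
    (H : ∀ β : Ordinal.{0}, β ≤ γ → Set (Set X))
    (hz : γ = 0) (hH : ∀ β hβ, H β hβ = O_U) : F γ hγ H = F 0 h0 (fun _ _ => O_U) := by
  subst hz
  exact congrArg _ (funext fun β => funext fun hβ => hH β hβ)

open Classical in
/-- TWO's strategy on the complement of `U`, obtained from a strategy `F` on `X` by
pretending that inning `γ` is inning `γ+1` of the `X`-game whose inning `0` was
`O_U` (answered inside `U`). -/
noncomputable def shiftStrat (k : ℕ) (F : TwoStrategy X (k : Ordinal.{0})) (U : Set X)
    (O_U : Set (Set X)) : TwoStrategy ↥(Uᶜ) (((k - 1 : ℕ) : ℕ) : Ordinal.{0}) := fun γ _ H =>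
  if hγ' : ((ordToNat γ + 1 : ℕ) : Ordinal.{0}) < (k : Ordinal.{0}) then
    (if h : ∃ V ∈ H γ le_rfl, liftSet U V =
        F ((ordToNat γ + 1 : ℕ) : Ordinal.{0}) hγ'
          (fun β _ => if β = (0 : Ordinal.{0}) then O_U
            else liftSet U ''
              (if hm : ((ordToNat β - 1 : ℕ) : Ordinal.{0}) ≤ γ
               then H ((ordToNat β - 1 : ℕ) : Ordinal.{0}) hm else ∅))
      then h.choose else ∅)
  else ∅

lemma removeFirstInning {k : ℕ} (F : TwoStrategy X (k : Ordinal.{0}))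
    (hF : IsWinningTwo (kfdSets X) (k : Ordinal.{0}) F) (h0 : (0:Ordinal.{0}) < (k:Ordinal.{0}))
    {U : Set X} (hU : IsOpen U) {O_U : Set (Set X)} (hO_U : IsTCover (kfdSets X) O_U)
    (hresp : F 0 h0 (fun _ _ => O_U) ⊆ U) :
    TwoWins ↥(Uᶜ) (kfdSets ↥(Uᶜ)) (((k - 1 : ℕ)) : Ordinal.{0}) := by
  classical
  refine ⟨shiftStrat k F U O_U, ?_, ?_⟩
  · -- legality
    intro γ hγ H hH
    obtain ⟨n, hn, rfl⟩ := exists_nat_lt_of_lt_natCast hγ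
    have hγ' : ((ordToNat ((n:ℕ) : Ordinal.{0}) + 1 : ℕ) : Ordinal.{0}) < (k : Ordinal.{0}) := by
      rw [ordToNat_cast]; exact_mod_cast (by omega : n + 1 < k)
    simp only [shiftStrat]
    rw [dif_pos hγ']
    set XH : ∀ β : Ordinal.{0}, β ≤ ((ordToNat ((n:ℕ) : Ordinal.{0}) + 1 : ℕ) : Ordinal.{0}) →
        Set (Set X) := fun β _ =>
      if β = (0 : Ordinal.{0}) then O_U
      else liftSet U ''
        (if hm : ((ordToNat β - 1 : ℕ) : Ordinal.{0}) ≤ ((n:ℕ) : Ordinal.{0})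
         then H ((ordToNat β - 1 : ℕ) : Ordinal.{0}) hm else ∅) with hXH
    have hlegal : ∀ β hβ, IsTCover (kfdSets X) (XH β hβ) := by
      intro β hβ
      by_cases hβ0 : β = (0 : Ordinal.{0})
      · simp only [hXH, if_pos hβ0]; exact hO_U
      · simp only [hXH, if_neg hβ0]
        have hβω : β = ((ordToNat β : ℕ) : Ordinal.{0}) :=
          ordToNat_eq (lt_of_le_of_lt hβ (Ordinal.nat_lt_omega0 _))
        have hble : ordToNat β ≤ ordToNat ((n:ℕ) : Ordinal.{0}) + 1 := by
          rw [hβω] at hβ; exact_mod_cast hβ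
        rw [ordToNat_cast] at hble
        have hmle : ((ordToNat β - 1 : ℕ) : Ordinal.{0}) ≤ ((n:ℕ) : Ordinal.{0}) := by
          exact_mod_cast (by omega : ordToNat β - 1 ≤ n)
        rw [dif_pos hmle]
        exact lift_TCover hU (hH _ hmle)
    have hmem := hF.1 _ hγ' XH hlegal
    have h2 : (ordToNat (((ordToNat ((n:ℕ) : Ordinal.{0}) + 1 : ℕ)) : Ordinal.{0}) - 1 : ℕ)
        = n := by simp only [ordToNat_cast]; omega
    have hXHval : XH ((ordToNat ((n:ℕ) : Ordinal.{0}) + 1 : ℕ) : Ordinal.{0}) le_rfl =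
        liftSet U '' (H ((n:ℕ) : Ordinal.{0}) le_rfl) := by
      have h1 : ((ordToNat ((n:ℕ) : Ordinal.{0}) + 1 : ℕ) : Ordinal.{0}) ≠ 0 := by
        rw [ordToNat_cast]
        exact_mod_cast (by omega : (n + 1 : ℕ) ≠ 0)
      have e : ((ordToNat (((ordToNat ((n:ℕ) : Ordinal.{0}) + 1 : ℕ)) : Ordinal.{0}) - 1 : ℕ) :
          Ordinal.{0}) = ((n:ℕ) : Ordinal.{0}) := congrArg _ h2
      have h3 : ((ordToNat (((ordToNat ((n:ℕ) : Ordinal.{0}) + 1 : ℕ)) : Ordinal.{0}) - 1 : ℕ) :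
          Ordinal.{0}) ≤ ((n:ℕ) : Ordinal.{0}) := le_of_eq e
      simp only [hXH]
      rw [if_neg h1, dif_pos h3]
      exact congrArg (Set.image (liftSet U)) (hist_congr H e)
    rw [hXHval] at hmem
    obtain ⟨V, hV, hLV⟩ := hmem
    have hex : ∃ V ∈ H ((n:ℕ) : Ordinal.{0}) le_rfl, liftSet U V = F _ hγ' XH :=
      ⟨V, hV, hLV⟩
    rw [dif_pos hex]
    exact hex.choose_spec.1
  · -- coverage
    intro O hO x
    set OX : ∀ γ : Ordinal.{0}, γ < (k : Ordinal.{0}) → Set (Set X) := fun γ _ =>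
      if γ = (0 : Ordinal.{0}) then O_U
      else liftSet U ''
        (if h : ((ordToNat γ - 1 : ℕ) : Ordinal.{0}) < (((k - 1 : ℕ)) : Ordinal.{0})
         then O ((ordToNat γ - 1 : ℕ) : Ordinal.{0}) h else ∅) with hOX
    have hOXlegal : ∀ γ hγ, IsTCover (kfdSets X) (OX γ hγ) := by
      intro γ hγ
      by_cases hγ0 : γ = (0 : Ordinal.{0})
      · simp only [hOX, if_pos hγ0]; exact hO_U
      · simp only [hOX, if_neg hγ0]
        obtain ⟨n, hn, rfl⟩ := exists_nat_lt_of_lt_natCast hγ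
        have hn0 : n ≠ 0 := by
          intro h; apply hγ0; rw [h]; exact Nat.cast_zero
        have hlt : ((ordToNat ((n:ℕ) : Ordinal.{0}) - 1 : ℕ) : Ordinal.{0}) <
            (((k - 1 : ℕ)) : Ordinal.{0}) := by
          rw [ordToNat_cast]
          exact_mod_cast (by omega : n - 1 < k - 1)
        rw [dif_pos hlt]
        exact lift_TCover hU (hO _ hlt)
    obtain ⟨γ, hγ, hxmem⟩ := hF.2 OX hOXlegal (x : X)
    obtain ⟨n, hn, rfl⟩ := exists_nat_lt_of_lt_natCast hγ
    rcases n with _ | m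
    · -- inning 0 : contradiction, the response is inside U
      exfalso
      have heq : F ((0:ℕ) : Ordinal.{0}) hγ (fun β hβ => OX β (lt_of_le_of_lt hβ hγ)) =
          F 0 h0 (fun _ _ => O_U) := by
        refine strat_eval_zero F h0 O_U hγ _ (Nat.cast_zero) ?_
        intro β hβ
        have hβ0 : β = (0 : Ordinal.{0}) := by
          rw [Nat.cast_zero] at hβ; exact nonpos_iff_eq_zero.mp hβ
        simp only [hOX, if_pos hβ0]
      rw [heq] at hxmem
      exact x.2 (hresp hxmem)
    · -- inning m+1
      have hm : ((m:ℕ) : Ordinal.{0}) < (((k - 1 : ℕ)) : Ordinal.{0}) := by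
        exact_mod_cast (by omega : m < k - 1)
      refine ⟨((m:ℕ) : Ordinal.{0}), hm, ?_⟩
      have hγ' : ((ordToNat ((m:ℕ) : Ordinal.{0}) + 1 : ℕ) : Ordinal.{0}) < (k : Ordinal.{0}) := by
        rw [ordToNat_cast]; exact_mod_cast (by omega : m + 1 < k)
      -- my private copy of the X-history that the shifted strategy reconstructs
      set XH : ∀ β : Ordinal.{0}, β ≤ ((ordToNat ((m:ℕ) : Ordinal.{0}) + 1 : ℕ) : Ordinal.{0}) →
          Set (Set X) := fun β _ =>
        if β = (0 : Ordinal.{0}) then O_U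
        else liftSet U ''
          (if hmm : ((ordToNat β - 1 : ℕ) : Ordinal.{0}) ≤ ((m:ℕ) : Ordinal.{0})
           then O ((ordToNat β - 1 : ℕ) : Ordinal.{0}) (lt_of_le_of_lt hmm hm) else ∅) with hXH
      have hXHlegal : ∀ β hβ, IsTCover (kfdSets X) (XH β hβ) := by
        intro β hβ
        by_cases hβ0 : β = (0 : Ordinal.{0})
        · simp only [hXH, if_pos hβ0]; exact hO_U
        · simp only [hXH, if_neg hβ0]
          have hβω : β = ((ordToNat β : ℕ) : Ordinal.{0}) :=
            ordToNat_eq (lt_of_le_of_lt hβ (Ordinal.nat_lt_omega0 _))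
          have hble : ordToNat β ≤ ordToNat ((m:ℕ) : Ordinal.{0}) + 1 := by
            rw [hβω] at hβ; exact_mod_cast hβ
          rw [ordToNat_cast] at hble
          have hmle : ((ordToNat β - 1 : ℕ) : Ordinal.{0}) ≤ ((m:ℕ) : Ordinal.{0}) := by
            exact_mod_cast (by omega : ordToNat β - 1 ≤ m)
          rw [dif_pos hmle]
          exact lift_TCover hU (hO _ _)
      -- the histories agree
      have hagree : ∀ β (hβ₁ : β ≤ ((Nat.succ m : ℕ) : Ordinal.{0}))
          (hβ₂ : β ≤ ((ordToNat ((m:ℕ) : Ordinal.{0}) + 1 : ℕ) : Ordinal.{0})),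
          OX β (lt_of_le_of_lt hβ₁ hγ) = XH β hβ₂ := by
        intro β hβ₁ hβ₂
        by_cases hβ0 : β = (0 : Ordinal.{0})
        · simp only [hOX, hXH, if_pos hβ0]
        · simp only [hOX, hXH, if_neg hβ0]
          have hβω : β = ((ordToNat β : ℕ) : Ordinal.{0}) :=
            ordToNat_eq (lt_of_le_of_lt hβ₁ (Ordinal.nat_lt_omega0 _))
          have hble : ordToNat β ≤ m + 1 := by
            rw [hβω] at hβ₁; exact_mod_cast hβ₁
          have hc1 : ((ordToNat β - 1 : ℕ) : Ordinal.{0}) < (((k - 1 : ℕ)) : Ordinal.{0}) := by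
            exact_mod_cast (by omega : ordToNat β - 1 < k - 1)
          have hc2 : ((ordToNat β - 1 : ℕ) : Ordinal.{0}) ≤ ((m:ℕ) : Ordinal.{0}) := by
            exact_mod_cast (by omega : ordToNat β - 1 ≤ m)
          rw [dif_pos hc1, dif_pos hc2]
      have hFeq : F ((Nat.succ m : ℕ) : Ordinal.{0}) hγ
            (fun β hβ => OX β (lt_of_le_of_lt hβ hγ)) =
          F ((ordToNat ((m:ℕ) : Ordinal.{0}) + 1 : ℕ) : Ordinal.{0}) hγ' XH :=
        strat_congr F (by rw [ordToNat_cast]) hγ hγ' _ _ hagree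
      rw [hFeq] at hxmem
      -- now evaluate the shifted strategy
      simp only [shiftStrat]
      rw [dif_pos hγ']
      -- identify the reconstructed history with XH
      have h1 : ((ordToNat ((m:ℕ) : Ordinal.{0}) + 1 : ℕ) : Ordinal.{0}) ≠ 0 := by
        rw [ordToNat_cast]
        exact_mod_cast (by omega : (m + 1 : ℕ) ≠ 0)
      have h2 : (ordToNat (((ordToNat ((m:ℕ) : Ordinal.{0}) + 1 : ℕ)) : Ordinal.{0}) - 1 : ℕ)
          = m := by simp only [ordToNat_cast]; omega
      have e : ((ordToNat (((ordToNat ((m:ℕ) : Ordinal.{0}) + 1 : ℕ)) : Ordinal.{0}) - 1 : ℕ) :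
          Ordinal.{0}) = ((m:ℕ) : Ordinal.{0}) := congrArg _ h2
      have h3 := le_of_eq e
      have hex : ∃ V ∈ O ((m:ℕ) : Ordinal.{0}) (lt_of_le_of_lt le_rfl hm), liftSet U V =
          F ((ordToNat ((m:ℕ) : Ordinal.{0}) + 1 : ℕ) : Ordinal.{0}) hγ' XH := by
        have hmem := hF.1 _ hγ' XH hXHlegal
        have hval : XH ((ordToNat ((m:ℕ) : Ordinal.{0}) + 1 : ℕ) : Ordinal.{0}) le_rfl =
            liftSet U '' (O ((m:ℕ) : Ordinal.{0}) (lt_of_le_of_lt le_rfl hm)) := by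
          simp only [hXH]
          rw [if_neg h1, dif_pos h3]
          exact congrArg (Set.image (liftSet U)) (play_congr O e)
        rw [hval] at hmem
        obtain ⟨V, hV, hLV⟩ := hmem
        exact ⟨V, hV, hLV⟩
      rw [hXH] at hxmem hex
      split
      next hc =>
        obtain ⟨hVmem, hLV⟩ := hc.choose_spec
        have hVopen : IsOpen hc.choose := (hO _ _).1 _ hVmem
        have hxW : (x : X) ∈ liftSet U hc.choose := by rw [hLV]; exact hxmem
        have := of_mem_liftSet hVopen hxW x.2
        simpa [Subtype.coe_eta] using this
      next hc => exact absurd hex hc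


open Classical in
/-- TWO's first move: an element of `𝓤` containing `C`, if one exists. -/
noncomputable def firstT (C : Set X) (𝓤 : Set (Set X)) : Set X :=
  if h : ∃ T ∈ 𝓤, C ⊆ T ∧ IsOpen T then h.choose else ∅

lemma firstT_spec {C : Set X} {𝓤 : Set (Set X)} (h : ∃ T ∈ 𝓤, C ⊆ T ∧ IsOpen T) :
    firstT C 𝓤 ∈ 𝓤 ∧ C ⊆ firstT C 𝓤 ∧ IsOpen (firstT C 𝓤) := by
  rw [firstT, dif_pos h]
  exact ⟨h.choose_spec.1, h.choose_spec.2.1, h.choose_spec.2.2⟩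

lemma firstT_mem_of_cover {C : Set X} (hC : C ∈ kfdSets X) {𝓤 : Set (Set X)}
    (h𝓤 : IsTCover (kfdSets X) 𝓤) : ∃ T ∈ 𝓤, C ⊆ T ∧ IsOpen T := by
  obtain ⟨T, hT, hCT⟩ := h𝓤.2.2 C hC
  exact ⟨T, hT, hCT, h𝓤.1 T hT⟩

open Classical in
/-- An arbitrary element of a nonempty family. -/
noncomputable def dummySet (𝓤 : Set (Set X)) : Set X :=
  if h : ∃ T, T ∈ 𝓤 then h.choose else ∅

lemma dummySet_mem {𝓤 : Set (Set X)} (h : ∃ T, T ∈ 𝓤) : dummySet 𝓤 ∈ 𝓤 := by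
  rw [dummySet, dif_pos h]; exact h.choose_spec

open Classical in
/-- TWO's strategy on `X`: answer the first move with a set containing `C`, then
simulate a winning strategy on the complement of that set. -/
noncomputable def combStrat (C : Set X) (m : Set X → ℕ)
    (G : ∀ U : Set X, TwoStrategy ↥(Uᶜ) ((m U : ℕ) : Ordinal.{0})) (k' : ℕ) :
    TwoStrategy X ((k' : ℕ) : Ordinal.{0}) := fun γ _ H =>
  if hz : γ = (0 : Ordinal.{0}) then firstT C (H 0 (zero_le : (0:Ordinal.{0}) ≤ γ))
  else if hj : ((ordToNat γ - 1 : ℕ) : Ordinal.{0}) <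
      ((m (firstT C (H 0 (zero_le : (0:Ordinal.{0}) ≤ γ))) : ℕ) : Ordinal.{0}) then
    (if h : ∃ V ∈ H γ le_rfl, (Subtype.val ⁻¹' V :
          Set ↥((firstT C (H 0 (zero_le : (0:Ordinal.{0}) ≤ γ)))ᶜ)) =
        G (firstT C (H 0 (zero_le : (0:Ordinal.{0}) ≤ γ))) ((ordToNat γ - 1 : ℕ) : Ordinal.{0}) hj
          (fun β _ => (fun V => (Subtype.val ⁻¹' V :
              Set ↥((firstT C (H 0 (zero_le : (0:Ordinal.{0}) ≤ γ)))ᶜ))) ''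
            (if hb : ((ordToNat β + 1 : ℕ) : Ordinal.{0}) ≤ γ
             then H ((ordToNat β + 1 : ℕ) : Ordinal.{0}) hb else ∅))
      then h.choose else dummySet (H γ le_rfl))
  else dummySet (H γ le_rfl)

lemma addFirstInning {k' : ℕ} (hk' : 0 < k') {C : Set X} (hC : C ∈ kfdSets X)
    (m : Set X → ℕ) (G : ∀ U : Set X, TwoStrategy ↥(Uᶜ) ((m U : ℕ) : Ordinal.{0}))
    (hmk : ∀ U, IsOpen U → C ⊆ U → m U + 1 ≤ k')
    (hG : ∀ U, IsOpen U → C ⊆ U →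
      IsWinningTwo (kfdSets ↥(Uᶜ)) ((m U : ℕ) : Ordinal.{0}) (G U)) :
    TwoWins X (kfdSets X) ((k' : ℕ) : Ordinal.{0}) := by
  classical
  refine ⟨combStrat C m G k', ?_, ?_⟩
  · -- legality
    intro γ hγ H hH
    by_cases hz : γ = (0 : Ordinal.{0})
    · simp only [combStrat]
      rw [dif_pos hz]
      have hex := firstT_mem_of_cover hC (hH 0 (zero_le : (0:Ordinal.{0}) ≤ γ))
      have hmem := (firstT_spec hex).1
      have e : H 0 (zero_le : (0:Ordinal.{0}) ≤ γ) = H γ le_rfl := hist_congr H hz.symm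
      rw [← e]
      exact hmem
    · simp only [combStrat]
      rw [dif_neg hz]
      split
      · split
        next hc => exact hc.choose_spec.1
        next _ => exact dummySet_mem (hH γ le_rfl).nonempty'
      · exact dummySet_mem (hH γ le_rfl).nonempty'
  · -- coverage
    intro O hO x
    have h0k : (0 : Ordinal.{0}) < ((k' : ℕ) : Ordinal.{0}) := by exact_mod_cast hk'
    set U := firstT C (O 0 h0k) with hUdef
    have hexU := firstT_mem_of_cover hC (hO 0 h0k)
    obtain ⟨hUmem, hCU, hUopen⟩ := firstT_spec hexU
    by_cases hxU : x ∈ U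
    · refine ⟨0, h0k, ?_⟩
      simp only [combStrat]
      rw [dif_pos trivial]
      rw [hUdef] at hxU
      exact hxU
    · have hx' : x ∈ Uᶜ := hxU
      have hmk' := hmk U hUopen hCU
      set OY : ∀ β : Ordinal.{0}, β < ((m U : ℕ) : Ordinal.{0}) → Set (Set ↥(Uᶜ)) :=
        fun β _ =>
          (fun V => (Subtype.val ⁻¹' V : Set ↥(Uᶜ))) ''
            (if hb : ((ordToNat β + 1 : ℕ) : Ordinal.{0}) < ((k' : ℕ) : Ordinal.{0})
             then O ((ordToNat β + 1 : ℕ) : Ordinal.{0}) hb else ∅) with hOY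
      have hOYlegal : ∀ β hβ, IsTCover (kfdSets ↥(Uᶜ)) (OY β hβ) := by
        intro β hβ
        obtain ⟨i, hi, rfl⟩ := exists_nat_lt_of_lt_natCast hβ
        have hb : ((ordToNat ((i:ℕ) : Ordinal.{0}) + 1 : ℕ) : Ordinal.{0}) <
            ((k' : ℕ) : Ordinal.{0}) := by
          rw [ordToNat_cast]; exact_mod_cast (by omega : i + 1 < k')
        simp only [hOY]
        rw [dif_pos hb]
        exact restrict_TCover _ (hO _ hb)
      obtain ⟨β, hβ, hymem⟩ := (hG U hUopen hCU).2 OY hOYlegal ⟨x, hx'⟩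
      obtain ⟨j, hj, rfl⟩ := exists_nat_lt_of_lt_natCast hβ
      have hjk : (((j + 1 : ℕ)) : Ordinal.{0}) < ((k' : ℕ) : Ordinal.{0}) := by
        exact_mod_cast (by omega : j + 1 < k')
      refine ⟨((j + 1 : ℕ) : Ordinal.{0}), hjk, ?_⟩
      have hz : ¬(((j + 1 : ℕ) : Ordinal.{0}) = 0) := by
        exact_mod_cast (by omega : ¬(j + 1 = 0))
      simp only [combStrat]
      rw [dif_neg hz]
      have hfix : firstT C (O 0 (lt_of_le_of_lt (zero_le : (0:Ordinal.{0}) ≤ ((j + 1 : ℕ) : Ordinal.{0}))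
          hjk)) = U := by rw [hUdef]
      rw [hfix]
      have hjj : (ordToNat (((j + 1 : ℕ)) : Ordinal.{0}) - 1 : ℕ) = j := by
        rw [ordToNat_cast]; omega
      have eidx : ((ordToNat (((j + 1 : ℕ)) : Ordinal.{0}) - 1 : ℕ) : Ordinal.{0})
          = ((j : ℕ) : Ordinal.{0}) := congrArg _ hjj
      have e2 : ((ordToNat (((ordToNat (((j + 1 : ℕ)) : Ordinal.{0}) - 1 : ℕ) : Ordinal.{0}))
          + 1 : ℕ) : Ordinal.{0}) = (((j + 1 : ℕ)) : Ordinal.{0}) := by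
        rw [ordToNat_cast, hjj]
      have hc2 : ((ordToNat (((ordToNat (((j + 1 : ℕ)) : Ordinal.{0}) - 1 : ℕ) : Ordinal.{0}))
          + 1 : ℕ) : Ordinal.{0}) ≤ (((j + 1 : ℕ)) : Ordinal.{0}) := le_of_eq e2
      have hj'' : ((ordToNat (((j + 1 : ℕ)) : Ordinal.{0}) - 1 : ℕ) : Ordinal.{0}) <
          ((m U : ℕ) : Ordinal.{0}) := by rw [eidx]; exact_mod_cast hj
      rw [dif_pos hj'']
      -- pointwise agreement of the two histories of the simulated game
      have hagree : ∀ (β' : Ordinal.{0}) (hb₁ : β' ≤ ((j:ℕ) : Ordinal.{0}))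
          (hb₂ : β' ≤ ((ordToNat (((j + 1 : ℕ)) : Ordinal.{0}) - 1 : ℕ) : Ordinal.{0})),
          OY β' (lt_of_le_of_lt hb₁ hβ) =
          (fun V => (Subtype.val ⁻¹' V : Set ↥(Uᶜ))) ''
            (if hb : ((ordToNat β' + 1 : ℕ) : Ordinal.{0}) ≤ ((j + 1 : ℕ) : Ordinal.{0})
             then O ((ordToNat β' + 1 : ℕ) : Ordinal.{0})
               (lt_of_le_of_lt hb hjk) else ∅) := by
        intro β' hb₁ hb₂
        have hβω : β' = ((ordToNat β' : ℕ) : Ordinal.{0}) :=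
          ordToNat_eq (lt_of_le_of_lt hb₁ (Ordinal.nat_lt_omega0 _))
        have hile : ordToNat β' ≤ j := by
          rw [hβω] at hb₁; exact_mod_cast hb₁
        have hc1 : ((ordToNat β' + 1 : ℕ) : Ordinal.{0}) < ((k' : ℕ) : Ordinal.{0}) := by
          exact_mod_cast (by omega : ordToNat β' + 1 < k')
        have hc2' : ((ordToNat β' + 1 : ℕ) : Ordinal.{0}) ≤ ((j + 1 : ℕ) : Ordinal.{0}) := by
          exact_mod_cast (by omega : ordToNat β' + 1 ≤ j + 1)
        simp only [hOY]
        rw [dif_pos hc1, dif_pos hc2']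
      have hGeq := strat_congr (G U) eidx.symm hβ hj''
        (fun β' hβ' => OY β' (lt_of_le_of_lt hβ' hβ))
        (fun β' _ => (fun V => (Subtype.val ⁻¹' V : Set ↥(Uᶜ))) ''
          (if hb : ((ordToNat β' + 1 : ℕ) : Ordinal.{0}) ≤ ((j + 1 : ℕ) : Ordinal.{0})
           then O ((ordToNat β' + 1 : ℕ) : Ordinal.{0}) (lt_of_le_of_lt hb hjk) else ∅))
        hagree
      split
      next hc =>
        obtain ⟨hVmem, hVeq⟩ := hc.choose_spec
        have h2 := hGeq ▸ hymem
        have hxin : (⟨x, hx'⟩ : ↥(Uᶜ)) ∈ (Subtype.val ⁻¹' hc.choose : Set ↥(Uᶜ)) := by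
          rw [hVeq]; exact h2
        exact hxin
      next hc =>
        exfalso
        apply hc
        have hHYlegal : ∀ (β' : Ordinal.{0})
            (hβ' : β' ≤ ((ordToNat (((j + 1 : ℕ)) : Ordinal.{0}) - 1 : ℕ) : Ordinal.{0})),
            IsTCover (kfdSets ↥(Uᶜ))
              ((fun β'' (_ : β'' ≤ ((ordToNat (((j + 1 : ℕ)) : Ordinal.{0}) - 1 : ℕ) :
                  Ordinal.{0})) =>
                (fun V => (Subtype.val ⁻¹' V : Set ↥(Uᶜ))) ''
                  (if hb : ((ordToNat β'' + 1 : ℕ) : Ordinal.{0}) ≤ ((j + 1 : ℕ) : Ordinal.{0})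
                   then O ((ordToNat β'' + 1 : ℕ) : Ordinal.{0})
                     (lt_of_le_of_lt hb hjk) else ∅)) β' hβ') := by
          intro β' hβ'
          have hβ'j : β' ≤ ((j:ℕ) : Ordinal.{0}) := eidx ▸ hβ'
          have hβω : β' = ((ordToNat β' : ℕ) : Ordinal.{0}) :=
            ordToNat_eq (lt_of_le_of_lt hβ'j (Ordinal.nat_lt_omega0 _))
          have hile : ordToNat β' ≤ j := by
            rw [hβω] at hβ'j; exact_mod_cast hβ'j
          have hc2' : ((ordToNat β' + 1 : ℕ) : Ordinal.{0}) ≤ ((j + 1 : ℕ) : Ordinal.{0}) := by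
            exact_mod_cast (by omega : ordToNat β' + 1 ≤ j + 1)
          simp only []
          rw [dif_pos hc2']
          exact restrict_TCover _ (hO _ _)
        have hmem := (hG U hUopen hCU).1
          ((ordToNat (((j + 1 : ℕ)) : Ordinal.{0}) - 1 : ℕ) : Ordinal.{0}) hj'' _ hHYlegal
        rw [dif_pos hc2, play_congr O e2 (h₂ := hjk)] at hmem
        obtain ⟨V, hV, hVeq⟩ := hmem
        exact ⟨V, hV, hVeq⟩
  done

end Game

theorem statement_4 {X : Type*} [MetricSpace X] [TopologicalSpace.SeparableSpace X]
    (hX : ¬ (CompactSpace X ∧ FinDim X)) (k : ℕ)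
    (htp : TPEq X (kfdSets X) (k : Ordinal.{0})) :
    ∃ C : Set X, C.Nonempty ∧ C ∈ kfdSets X ∧
      (∀ U : Set X, IsOpen U → C ⊆ U →
        TPLe ↥(Uᶜ) (kfdSets ↥(Uᶜ)) ((k - 1 : ℕ) : Ordinal.{0})) ∧
      ∃ U : Set X, IsOpen U ∧ C ⊆ U ∧
        TPEq ↥(Uᶜ) (kfdSets ↥(Uᶜ)) ((k - 1 : ℕ) : Ordinal.{0}) := by
  classical
  have hXne : Nonempty X := by
    by_contra h
    rw [not_nonempty_iff] at h
    have hfin : Finite X := Finite.of_subsingleton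
    exact hX ⟨inferInstance, finDim_of_subsingleton X⟩
  obtain ⟨x₀⟩ := hXne
  obtain ⟨F, hF⟩ := htp.1
  have hk0 : 0 < k := by
    by_contra h
    have hk : k = 0 := by omega
    subst hk
    obtain ⟨γ, hγ, -⟩ := hF.2 (fun _ _ => ∅)
      (fun γ hγ => absurd hγ (by simp)) x₀
    rw [Nat.cast_zero] at hγ
    exact absurd hγ (not_lt_of_ge (zero_le : (0:Ordinal.{0}) ≤ γ))
  have h0 : (0 : Ordinal.{0}) < (k : Ordinal.{0}) := by exact_mod_cast hk0
  have hclaim : ∃ C ∈ kfdSets X, ∀ U : Set X, IsOpen U → C ⊆ U →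
      ∃ O : Set (Set X), IsTCover (kfdSets X) O ∧ F 0 h0 (fun _ _ => O) ⊆ U := by
    by_contra hcon
    push_neg at hcon
    choose u hopen hsub hbad using hcon
    set 𝓞 : Set (Set X) := {V | ∃ C : Set X, ∃ hC : C ∈ kfdSets X, V = u C hC} with h𝓞
    have hcov : IsTCover (kfdSets X) 𝓞 := by
      refine ⟨?_, ?_, ?_⟩
      · rintro V ⟨C, hC, rfl⟩; exact hopen C hC
      · intro x
        exact ⟨u {x} (singleton_mem_kfdSets x), ⟨{x}, singleton_mem_kfdSets x, rfl⟩,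
          hsub _ _ (Set.mem_singleton x)⟩
      · intro T hT
        exact ⟨u T hT, ⟨T, hT, rfl⟩, hsub T hT⟩
    have hmem : F 0 h0 (fun _ _ => 𝓞) ∈ 𝓞 := hF.1 0 h0 (fun _ _ => 𝓞) (fun _ _ => hcov)
    obtain ⟨C₀, hC₀, heq⟩ := hmem
    exact hbad C₀ hC₀ 𝓞 hcov (heq ▸ subset_rfl)
  obtain ⟨C₀, hC₀, hprop₀⟩ := hclaim
  obtain ⟨C, hCne, hCkfd, hCprop⟩ : ∃ C : Set X, C.Nonempty ∧ C ∈ kfdSets X ∧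
      ∀ U : Set X, IsOpen U → C ⊆ U →
        ∃ O : Set (Set X), IsTCover (kfdSets X) O ∧ F 0 h0 (fun _ _ => O) ⊆ U := by
    rcases Set.eq_empty_or_nonempty C₀ with hE | hne
    · refine ⟨{x₀}, Set.singleton_nonempty x₀, singleton_mem_kfdSets x₀, ?_⟩
      intro U hU hsubU
      exact hprop₀ U hU (by rw [hE]; exact Set.empty_subset U)
    · exact ⟨C₀, hne, hC₀, hprop₀⟩
  have hpart1 : ∀ U : Set X, IsOpen U → C ⊆ U →
      TwoWins ↥(Uᶜ) (kfdSets ↥(Uᶜ)) (((k - 1 : ℕ)) : Ordinal.{0}) := by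
    intro U hU hsubU
    obtain ⟨O_U, hO_U, hresp⟩ := hCprop U hU hsubU
    exact removeFirstInning F hF h0 hU hO_U hresp
  refine ⟨C, hCne, hCkfd, ?_, ?_⟩
  · intro U hU hsubU
    exact ⟨((k - 1 : ℕ) : Ordinal.{0}), le_rfl, hpart1 U hU hsubU⟩
  · by_contra hcon
    push_neg at hcon
    have href : ∀ U : Set X, IsOpen U → C ⊆ U →
        ∃ β < (((k - 1 : ℕ)) : Ordinal.{0}), TwoWins ↥(Uᶜ) (kfdSets ↥(Uᶜ)) β := by
      intro U hU hsubU
      have h1 := hcon U hU hsubU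
      simp only [TPEq] at h1
      rw [not_and_or] at h1
      rcases h1 with h1 | h1
      · exact absurd (hpart1 U hU hsubU) h1
      · push_neg at h1
        exact h1
    by_cases hk1 : k = 1
    · subst hk1
      obtain ⟨β, hβ, -⟩ := href Set.univ isOpen_univ (Set.subset_univ C)
      rw [show (((1 - 1 : ℕ)) : Ordinal.{0}) = 0 by norm_num] at hβ
      exact absurd hβ (not_lt_of_ge (zero_le : (0:Ordinal.{0}) ≤ β))
    · have hk2 : 2 ≤ k := by omega
      have hstr : ∀ U : Set X, ∃ (mm : ℕ) (GG : TwoStrategy ↥(Uᶜ) ((mm : ℕ) : Ordinal.{0})),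
          IsOpen U → C ⊆ U → (mm + 1 ≤ k - 1 ∧
            IsWinningTwo (kfdSets ↥(Uᶜ)) ((mm : ℕ) : Ordinal.{0}) GG) := by
        intro U
        by_cases hgood : IsOpen U ∧ C ⊆ U
        · obtain ⟨β, hβ, hwin⟩ := href U hgood.1 hgood.2
          obtain ⟨mm, hmm, rfl⟩ := exists_nat_lt_of_lt_natCast hβ
          obtain ⟨GG, hGG⟩ := hwin
          exact ⟨mm, GG, fun _ _ => ⟨by omega, hGG⟩⟩
        · exact ⟨0, fun _ _ _ => ∅, fun h1 h2 => absurd ⟨h1, h2⟩ hgood⟩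
      choose m G hmG using hstr
      have hwinX := addFirstInning (k' := k - 1) (by omega) hCkfd m G
        (fun U h1 h2 => (hmG U h1 h2).1) (fun U h1 h2 => (hmG U h1 h2).2)
      exact htp.2 (((k - 1 : ℕ)) : Ordinal.{0})
        (by exact_mod_cast (by omega : k - 1 < k)) hwinX
end

section
/- Let X be a separable metric space, α an ordinal, and Y₁, …, Yₙ subspaces of X such that for each j ≤ n, TWO has a winning strategy in the game G₁^α(𝓞_kfd,𝓞) on Y_j. Then TWO has a winning strategy in G₁^α(𝓞_kfd,𝓞) on ⋃_{j≤n} Y_j; that is, tp_{S₁(𝓞_kfd,𝓞)}(⋃_{j≤n} Y_j) ≤ α whenever tp_{S₁(𝓞_kfd,𝓞)}(Y_j) ≤ α for each j. -/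
open Set Topology

set_option linter.unusedSectionVars false

section DimLemmas

variable {X₁ X₂ : Type*} [TopologicalSpace X₁] [TopologicalSpace X₂]

theorem covdim_homeo (f : X₁ ≃ₜ X₂) {n : ℕ} (h : CovDimLE X₁ n) : CovDimLE X₂ n := by
  intro 𝓤 h𝓤fin h𝓤open h𝓤cov
  obtain ⟨𝓥, h𝓥open, h𝓥cov, h𝓥ref, h𝓥pt⟩ :=
    h ((f ⁻¹' ·) '' 𝓤) (h𝓤fin.image _)
      (by rintro V ⟨U, hU, rfl⟩; exact (h𝓤open U hU).preimage f.continuous)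
      (by
        ext x
        simp only [Set.mem_sUnion, Set.mem_image, Set.mem_univ, iff_true]
        have : f x ∈ ⋃₀ 𝓤 := h𝓤cov ▸ Set.mem_univ _
        obtain ⟨U, hU, hx⟩ := this
        exact ⟨f ⁻¹' U, ⟨U, hU, rfl⟩, hx⟩)
  refine ⟨(f.symm ⁻¹' ·) '' 𝓥, ?_, ?_, ?_, ?_⟩
  · rintro V ⟨W, hW, rfl⟩; exact (h𝓥open W hW).preimage f.symm.continuous
  · ext y
    simp only [Set.mem_sUnion, Set.mem_image, Set.mem_univ, iff_true]
    have : f.symm y ∈ ⋃₀ 𝓥 := h𝓥cov ▸ Set.mem_univ _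
    obtain ⟨W, hW, hy⟩ := this
    exact ⟨f.symm ⁻¹' W, ⟨W, hW, rfl⟩, hy⟩
  · rintro V ⟨W, hW, rfl⟩
    obtain ⟨U', ⟨U, hU, rfl⟩, hWU⟩ := h𝓥ref W hW
    refine ⟨U, hU, fun y hy => ?_⟩
    have : f.symm y ∈ f ⁻¹' U := hWU hy
    simpa using this
  · intro y
    have hinj : Function.Injective ((f.symm ⁻¹' ·) : Set X₁ → Set X₂) :=
      Set.preimage_injective.mpr f.symm.surjective
    have hset : {V | V ∈ (f.symm ⁻¹' ·) '' 𝓥 ∧ y ∈ V}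
        = (f.symm ⁻¹' ·) '' {W | W ∈ 𝓥 ∧ f.symm y ∈ W} := by
      ext V
      constructor
      · rintro ⟨⟨W, hW, rfl⟩, hy⟩; exact ⟨W, ⟨hW, hy⟩, rfl⟩
      · rintro ⟨W, ⟨hW, hy⟩, rfl⟩; exact ⟨⟨W, hW, rfl⟩, hy⟩
    obtain ⟨hfin, hcard⟩ := h𝓥pt (f.symm y)
    constructor
    · rw [hset]; exact hfin.image _
    · rw [hset, Set.ncard_image_of_injective _ hinj]; exact hcard

theorem covdim_subsingleton [Subsingleton X₁] : CovDimLE X₁ 0 := by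
  intro 𝓤 _ h𝓤open h𝓤cov
  rcases isEmpty_or_nonempty X₁ with hE | ⟨⟨pt⟩⟩
  · refine ⟨∅, by simp, ?_, by simp, fun x => isEmptyElim x⟩
    ext x; exact isEmptyElim x
  · have : pt ∈ ⋃₀ 𝓤 := h𝓤cov ▸ Set.mem_univ _
    obtain ⟨U, hU, hpt⟩ := this
    refine ⟨{U}, ?_, ?_, ?_, ?_⟩
    · intro V hV
      rw [Set.mem_singleton_iff] at hV
      exact hV ▸ h𝓤open U hU
    · ext x
      simp only [Set.sUnion_singleton, Set.mem_univ, iff_true]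
      exact (Subsingleton.elim x pt) ▸ hpt
    · intro V hV
      rw [Set.mem_singleton_iff] at hV
      exact ⟨U, hU, hV ▸ subset_rfl⟩
    · intro x
      have hsub : {V | V ∈ ({U} : Set (Set X₁)) ∧ x ∈ V} ⊆ {U} := fun V hV => hV.1
      exact ⟨(Set.finite_singleton U).subset hsub,
        le_trans (Set.ncard_le_ncard hsub (Set.finite_singleton U)) (by simp)⟩

theorem findim_homeo (f : X₁ ≃ₜ X₂) (h : FinDim X₁) : FinDim X₂ :=
  ⟨h.choose, covdim_homeo f h.choose_spec⟩

theorem findim_subsingleton [Subsingleton X₁] : FinDim X₁ := ⟨0, covdim_subsingleton⟩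

end DimLemmas
section SumTheorem

open EMetric

variable {Xm : Type*} [MetricSpace Xm]

/-- Extension machine: a finite open family in `X` covering the compact set `A`,
refining `𝓤`, with order at every point of `X` at most `m+1`. -/
theorem extend_family {A : Set Xm} (hA : IsCompact A) {m : ℕ} (hd : CovDimLE ↥A m)
    (𝓤 : Set (Set Xm)) (h𝓤fin : 𝓤.Finite) (h𝓤open : ∀ U ∈ 𝓤, IsOpen U)
    (h𝓤cov : ⋃₀ 𝓤 = Set.univ) :
    ∃ 𝓐 : Set (Set Xm), 𝓐.Finite ∧ (∀ P ∈ 𝓐, IsOpen P) ∧ A ⊆ ⋃₀ 𝓐 ∧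
      (∀ P ∈ 𝓐, ∃ U ∈ 𝓤, P ⊆ U) ∧ ∀ x : Xm, {P | P ∈ 𝓐 ∧ x ∈ P}.ncard ≤ m + 1 := by
  classical
  -- restrict 𝓤 to A
  obtain ⟨𝓥, h𝓥open, h𝓥cov, h𝓥ref, h𝓥pt⟩ :=
    hd (((Subtype.val ⁻¹' ·) : Set Xm → Set ↥A) '' 𝓤) (h𝓤fin.image _)
      (by rintro V ⟨U, hU, rfl⟩; exact (h𝓤open U hU).preimage continuous_subtype_val)
      (by
        ext a
        simp only [Set.mem_sUnion, Set.mem_image, Set.mem_univ, iff_true]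
        have : (a : Xm) ∈ ⋃₀ 𝓤 := h𝓤cov ▸ Set.mem_univ _
        obtain ⟨U, hU, ha⟩ := this
        exact ⟨_, ⟨U, hU, rfl⟩, ha⟩)
  -- finite subcover
  haveI : CompactSpace ↥A := isCompact_iff_compactSpace.mp hA
  have hcov' : (Set.univ : Set ↥A) ⊆ ⋃ V : 𝓥, (V : Set ↥A) := by
    intro a _
    have : a ∈ ⋃₀ 𝓥 := h𝓥cov ▸ Set.mem_univ _
    obtain ⟨V, hV, ha⟩ := this
    exact Set.mem_iUnion.mpr ⟨⟨V, hV⟩, ha⟩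
  obtain ⟨t, ht⟩ := isCompact_univ.elim_finite_subcover (fun V : 𝓥 => (V : Set ↥A))
    (fun V => h𝓥open V V.2) hcov'
  set 𝓥₀ : Set (Set ↥A) := Subtype.val '' (t : Set 𝓥) with h𝓥₀
  have h𝓥₀fin : 𝓥₀.Finite := (t.finite_toSet).image _
  have h𝓥₀sub : 𝓥₀ ⊆ 𝓥 := by rintro V ⟨W, _, rfl⟩; exact W.2
  have h𝓥₀cov : ∀ a : ↥A, ∃ V ∈ 𝓥₀, a ∈ V := by
    intro a
    have := ht (Set.mem_univ a)
    simp only [Set.mem_iUnion] at this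
    obtain ⟨V, hVt, ha⟩ := this
    exact ⟨V, ⟨V, hVt, rfl⟩, ha⟩
  -- choose data for each V ∈ 𝓥₀
  have hchoice : ∀ V ∈ 𝓥₀, ∃ H U, IsOpen H ∧ Subtype.val ⁻¹' H = V ∧ U ∈ 𝓤 ∧
      V ⊆ Subtype.val ⁻¹' U := by
    intro V hV
    obtain ⟨H, hHo, hHt⟩ := isOpen_induced_iff.mp (h𝓥open V (h𝓥₀sub hV))
    obtain ⟨U', ⟨U, hU, rfl⟩, hVU⟩ := h𝓥ref V (h𝓥₀sub hV)
    exact ⟨H, U, hHo, hHt, hU, hVU⟩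
  choose! HH UU hHo hHt hUm hVU using hchoice
  -- the extension
  set Ext : Set ↥A → Set Xm := fun V =>
    (HH V ∩ UU V) ∩ {x | infEdist x (Subtype.val '' V) < infEdist x (A \ Subtype.val '' V)}
    with hExt
  have hExtOpen : ∀ V ∈ 𝓥₀, IsOpen (Ext V) := by
    intro V hV
    exact (((hHo V hV).inter (h𝓤open _ (hUm V hV)))).inter
      (isOpen_lt continuous_infEdist continuous_infEdist)
  have hclosed : ∀ V ∈ 𝓥₀, IsClosed (A \ Subtype.val '' V) := by
    intro V hV
    have himg : Subtype.val '' V = A ∩ HH V := by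
      conv_lhs => rw [← hHt V hV]
      exact Subtype.image_preimage_coe A (HH V)
    rw [himg]
    have : A \ (A ∩ HH V) = A ∩ (HH V)ᶜ := by ext z; simp [Set.mem_diff]
    rw [this]
    exact hA.isClosed.inter (hHo V hV).isClosed_compl
  have hmemExt : ∀ (a : ↥A) (V : Set ↥A), V ∈ 𝓥₀ → a ∈ V → (a : Xm) ∈ Ext V := by
    intro a V hV haV
    refine ⟨⟨?_, ?_⟩, ?_⟩
    · have := hHt V hV ▸ haV; exact this
    · exact hVU V hV haV
    · have h0 : infEdist (a : Xm) (Subtype.val '' V) = 0 :=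
        infEdist_zero_of_mem ⟨a, haV, rfl⟩
      have hpos : 0 < infEdist (a : Xm) (A \ Subtype.val '' V) := by
        rcases eq_or_ne (infEdist (a : Xm) (A \ Subtype.val '' V)) 0 with h | h
        · exfalso
          have hmem : (a : Xm) ∈ closure (A \ Subtype.val '' V) :=
            mem_closure_iff_infEdist_zero.mpr h
          rw [(hclosed V hV).closure_eq] at hmem
          exact hmem.2 ⟨a, haV, rfl⟩
        · exact pos_iff_ne_zero.mpr h
      simp only [Set.mem_setOf_eq, h0]
      exact hpos
  refine ⟨Ext '' 𝓥₀, h𝓥₀fin.image _, ?_, ?_, ?_, ?_⟩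
  · rintro P ⟨V, hV, rfl⟩; exact hExtOpen V hV
  · intro a ha
    obtain ⟨V, hV, haV⟩ := h𝓥₀cov ⟨a, ha⟩
    exact ⟨Ext V, ⟨V, hV, rfl⟩, hmemExt ⟨a, ha⟩ V hV haV⟩
  · rintro P ⟨V, hV, rfl⟩
    exact ⟨UU V, hUm V hV, fun x hx => hx.1.2⟩
  · intro x
    set T : Set (Set ↥A) := {V | V ∈ 𝓥₀ ∧ x ∈ Ext V} with hT
    have hTfin : T.Finite := h𝓥₀fin.subset fun V hV => hV.1
    have hsubImg : {P | P ∈ Ext '' 𝓥₀ ∧ x ∈ P} ⊆ Ext '' T := by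
      rintro P ⟨⟨V, hV, rfl⟩, hx⟩; exact ⟨V, ⟨hV, hx⟩, rfl⟩
    rcases T.eq_empty_or_nonempty with hTe | hTne
    · refine le_trans (Set.ncard_le_ncard hsubImg (hTfin.image _)) ?_
      rw [hTe]
      simp
    · -- find the common point a ∈ A
      obtain ⟨V₁, hV₁T, hV₁min⟩ := Set.exists_min_image T
        (fun V => infEdist x (Subtype.val '' V)) hTfin hTne
      obtain ⟨V₂, hV₂T, hV₂min⟩ := Set.exists_min_image T
        (fun V => infEdist x (A \ Subtype.val '' V)) hTfin hTne
      have hlt : infEdist x (Subtype.val '' V₁) < infEdist x (A \ Subtype.val '' V₂) :=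
        lt_of_le_of_lt (hV₁min V₂ hV₂T) hV₂T.2.2
      obtain ⟨a, haV₁, hdist⟩ := infEdist_lt_iff.mp hlt
      have haA : a ∈ A := by obtain ⟨b, _, rfl⟩ := haV₁; exact b.2
      have hamem : ∀ V ∈ T, (⟨a, haA⟩ : ↥A) ∈ V := by
        intro V hVT
        have hnot : a ∉ A \ Subtype.val '' V := fun hmem =>
          absurd hdist (not_lt.mpr (le_trans (hV₂min V hVT) (infEdist_le_edist_of_mem hmem)))
        have haV : a ∈ Subtype.val '' V := by
          by_contra hn; exact hnot ⟨haA, hn⟩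
        obtain ⟨b, hb, hba⟩ := haV
        exact (Subtype.ext hba : b = ⟨a, haA⟩) ▸ hb
      have hTsub : T ⊆ {V | V ∈ 𝓥 ∧ (⟨a, haA⟩ : ↥A) ∈ V} :=
        fun V hVT => ⟨h𝓥₀sub hVT.1, hamem V hVT⟩
      obtain ⟨hfinP, hcardP⟩ := h𝓥pt (⟨a, haA⟩ : ↥A)
      calc {P | P ∈ Ext '' 𝓥₀ ∧ x ∈ P}.ncard ≤ (Ext '' T).ncard :=
            Set.ncard_le_ncard hsubImg (hTfin.image _)
        _ ≤ T.ncard := Set.ncard_image_le hTfin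
        _ ≤ _ := Set.ncard_le_ncard hTsub hfinP
        _ ≤ m + 1 := hcardP

theorem covdim_sum {A B : Set Xm} (hA : IsCompact A) (hB : IsCompact B)
    (hU : A ∪ B = Set.univ) {m k : ℕ} (hdA : CovDimLE ↥A m) (hdB : CovDimLE ↥B k) :
    CovDimLE Xm (m + k + 1) := by
  intro 𝓤 h𝓤fin h𝓤open h𝓤cov
  obtain ⟨𝓐, h𝓐fin, h𝓐open, h𝓐cov, h𝓐ref, h𝓐card⟩ :=
    extend_family hA hdA 𝓤 h𝓤fin h𝓤open h𝓤cov
  obtain ⟨𝓑, h𝓑fin, h𝓑open, h𝓑cov, h𝓑ref, h𝓑card⟩ :=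
    extend_family hB hdB 𝓤 h𝓤fin h𝓤open h𝓤cov
  refine ⟨𝓐 ∪ ((fun Q => Q \ A) '' 𝓑), ?_, ?_, ?_, ?_⟩
  · rintro V (hV | ⟨Q, hQ, rfl⟩)
    · exact h𝓐open V hV
    · exact (h𝓑open Q hQ).sdiff hA.isClosed
  · ext x
    simp only [Set.mem_univ, iff_true, Set.mem_sUnion]
    by_cases hx : x ∈ A
    · obtain ⟨P, hP, hxP⟩ := h𝓐cov hx
      exact ⟨P, Or.inl hP, hxP⟩
    · have hxB : x ∈ B := by
        have : x ∈ A ∪ B := hU ▸ Set.mem_univ x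
        exact this.resolve_left hx
      obtain ⟨Q, hQ, hxQ⟩ := h𝓑cov hxB
      exact ⟨Q \ A, Or.inr ⟨Q, hQ, rfl⟩, ⟨hxQ, hx⟩⟩
  · rintro V (hV | ⟨Q, hQ, rfl⟩)
    · exact h𝓐ref V hV
    · obtain ⟨U, hU', hQU⟩ := h𝓑ref Q hQ
      exact ⟨U, hU', (Set.diff_subset).trans hQU⟩
  · intro x
    have hsub : {V | V ∈ 𝓐 ∪ ((fun Q => Q \ A) '' 𝓑) ∧ x ∈ V} ⊆
        {P | P ∈ 𝓐 ∧ x ∈ P} ∪ ((fun Q => Q \ A) '' {Q | Q ∈ 𝓑 ∧ x ∈ Q}) := by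
      rintro V ⟨hV | ⟨Q, hQ, rfl⟩, hx⟩
      · exact Or.inl ⟨hV, hx⟩
      · exact Or.inr ⟨Q, ⟨hQ, hx.1⟩, rfl⟩
    have hfin1 : {P | P ∈ 𝓐 ∧ x ∈ P}.Finite := h𝓐fin.subset fun P hP => hP.1
    have hfin2 : {Q | Q ∈ 𝓑 ∧ x ∈ Q}.Finite := h𝓑fin.subset fun Q hQ => hQ.1
    have hfinU : ({P | P ∈ 𝓐 ∧ x ∈ P} ∪ ((fun Q => Q \ A) '' {Q | Q ∈ 𝓑 ∧ x ∈ Q})).Finite :=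
      hfin1.union (hfin2.image _)
    refine ⟨hfinU.subset hsub, ?_⟩
    calc {V | V ∈ 𝓐 ∪ ((fun Q => Q \ A) '' 𝓑) ∧ x ∈ V}.ncard ≤ _ :=
          Set.ncard_le_ncard hsub hfinU
      _ ≤ {P | P ∈ 𝓐 ∧ x ∈ P}.ncard + ((fun Q => Q \ A) '' {Q | Q ∈ 𝓑 ∧ x ∈ Q}).ncard :=
          Set.ncard_union_le _ _
      _ ≤ (m + 1) + (k + 1) := by
          gcongr
          · exact h𝓐card x
          · exact le_trans (Set.ncard_image_le hfin2) (h𝓑card x)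
      _ = (m + k + 1) + 1 := by ring

end SumTheorem
section KfdLemmas

variable {Xt : Type*} [TopologicalSpace Xt]

/-- For `A ⊆ T`, the subspace `A` is homeomorphic to the corresponding
subset of the subspace `T`. -/
noncomputable def innerHomeo {A T : Set Xt} (hsub : A ⊆ T) :
    ↥A ≃ₜ ↥(Subtype.val ⁻¹' A : Set ↥T) where
  toFun a := ⟨⟨a.1, hsub a.2⟩, a.2⟩
  invFun b := ⟨b.1.1, b.2⟩
  left_inv a := rfl
  right_inv b := rfl
  continuous_toFun := by
    apply Continuous.subtype_mk
    apply Continuous.subtype_mk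
    exact continuous_subtype_val
  continuous_invFun := by
    apply Continuous.subtype_mk
    exact continuous_subtype_val.comp continuous_subtype_val

omit [TopologicalSpace Xt] in
private theorem incl_mem1 {s t : Set Xt} (hst : s ⊆ t) (S : Set ↥s)
    (b : ↥(Set.inclusion hst '' S)) : (b.1 : Xt) ∈ s := by
  obtain ⟨y, _, he⟩ := b.2
  have : (b.1 : Xt) = y.1 := by rw [← he]
  rw [this]; exact y.2

omit [TopologicalSpace Xt] in
private theorem incl_mem2 {s t : Set Xt} (hst : s ⊆ t) (S : Set ↥s)
    (b : ↥(Set.inclusion hst '' S)) : (⟨b.1.1, incl_mem1 hst S b⟩ : ↥s) ∈ S := by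
  obtain ⟨y, hy, he⟩ := b.2
  have h2 : (⟨b.1.1, incl_mem1 hst S b⟩ : ↥s) = y := Subtype.ext (by
    show (b.1 : Xt) = y.1
    rw [← he])
  rw [h2]; exact hy

/-- The image of a subset under the inclusion of subspaces is homeomorphic to it. -/
noncomputable def inclHomeo {s t : Set Xt} (hst : s ⊆ t) (S : Set ↥s) :
    ↥S ≃ₜ ↥(Set.inclusion hst '' S) where
  toFun a := ⟨Set.inclusion hst a.1, ⟨a.1, a.2, rfl⟩⟩
  invFun b := ⟨⟨b.1.1, incl_mem1 hst S b⟩, incl_mem2 hst S b⟩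
  left_inv a := Subtype.ext (Subtype.ext rfl)
  right_inv b := Subtype.ext (Subtype.ext rfl)
  continuous_toFun := by
    apply Continuous.subtype_mk
    apply Continuous.subtype_mk
    exact continuous_subtype_val.comp continuous_subtype_val
  continuous_invFun := by
    apply Continuous.subtype_mk
    apply Continuous.subtype_mk
    exact continuous_subtype_val.comp continuous_subtype_val

theorem kfd_singleton (x : Xt) : ({x} : Set Xt) ∈ kfdSets Xt := by
  refine ⟨isCompact_singleton, ?_⟩
  haveI : Subsingleton ↥({x} : Set Xt) :=
    ⟨fun a b => Subtype.ext (a.2.trans b.2.symm)⟩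
  exact findim_subsingleton

theorem kfd_empty : (∅ : Set Xt) ∈ kfdSets Xt := by
  refine ⟨isCompact_empty, ?_⟩
  haveI : Subsingleton ↥(∅ : Set Xt) := ⟨fun a => absurd a.2 (Set.notMem_empty _)⟩
  exact findim_subsingleton

theorem kfd_inclusion {s t : Set Xt} (hst : s ⊆ t) {S : Set ↥s}
    (hS : S ∈ kfdSets ↥s) : Set.inclusion hst '' S ∈ kfdSets ↥t :=
  ⟨hS.1.image (continuous_inclusion hst), findim_homeo (inclHomeo hst S) hS.2⟩

end KfdLemmas

section KfdMetric

variable {Xm : Type*} [MetricSpace Xm]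

theorem kfd_union {A B : Set Xm} (hA : A ∈ kfdSets Xm) (hB : B ∈ kfdSets Xm) :
    A ∪ B ∈ kfdSets Xm := by
  refine ⟨hA.1.union hB.1, ?_⟩
  obtain ⟨m, hm⟩ := hA.2
  obtain ⟨k, hk⟩ := hB.2
  have hcompact : ∀ (C : Set Xm) (hCsub : C ⊆ A ∪ B), IsCompact C →
      IsCompact (Subtype.val ⁻¹' C : Set ↥(A ∪ B)) := by
    intro C hCsub hC
    haveI : CompactSpace ↥C := isCompact_iff_compactSpace.mp hC
    have : (Subtype.val ⁻¹' C : Set ↥(A ∪ B)) = Set.range (Set.inclusion hCsub) := by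
      ext z
      constructor
      · intro hz; exact ⟨⟨z.1, hz⟩, Subtype.ext rfl⟩
      · rintro ⟨c, rfl⟩; exact c.2
    rw [this]
    exact isCompact_range (continuous_inclusion hCsub)
  refine ⟨m + k + 1, covdim_sum (Xm := ↥(A ∪ B))
    (hcompact A Set.subset_union_left hA.1) (hcompact B Set.subset_union_right hB.1)
    ?_ (covdim_homeo (innerHomeo Set.subset_union_left) hm)
    (covdim_homeo (innerHomeo Set.subset_union_right) hk)⟩
  ext z
  simp only [Set.mem_union, Set.mem_preimage, Set.mem_univ, iff_true]
  exact z.2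

theorem kfd_biUnion {ι : Type*} (s : Finset ι) (f : ι → Set Xm)
    (h : ∀ i ∈ s, f i ∈ kfdSets Xm) : (⋃ i ∈ s, f i) ∈ kfdSets Xm := by
  classical
  induction s using Finset.induction_on with
  | empty => simpa using kfd_empty
  | @insert a s ha ih =>
      rw [Finset.set_biUnion_insert]
      exact kfd_union (h _ (Finset.mem_insert_self _ _))
        (ih fun i hi => h i (Finset.mem_insert_of_mem hi))

theorem kfd_iUnion {nn : ℕ} (f : Fin nn → Set Xm) (h : ∀ j, f j ∈ kfdSets Xm) :
    (⋃ j, f j) ∈ kfdSets Xm := by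
  have : (⋃ j, f j) = ⋃ j ∈ (Finset.univ : Finset (Fin nn)), f j := by
    ext x; simp
  rw [this]
  exact kfd_biUnion _ _ fun i _ => h i

end KfdMetric
section GameMachinery

variable {Xs : Type*} [TopologicalSpace Xs] {α : Ordinal.{0}}

theorem isTCover_univ_cover : IsTCover (kfdSets Xs) ({Set.univ} : Set (Set Xs)) := by
  refine ⟨?_, ?_, ?_⟩
  · intro U hU
    rw [Set.mem_singleton_iff] at hU
    exact hU ▸ isOpen_univ
  · intro x; exact ⟨Set.univ, rfl, Set.mem_univ x⟩
  · intro T _; exact ⟨Set.univ, rfl, Set.subset_univ T⟩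

/-- Extend a history of length `γ` by one move at inning `γ`. -/
noncomputable def extendH (γ : Ordinal.{0}) (h : ∀ β : Ordinal.{0}, β < γ → Set (Set Xs))
    (𝓤 : Set (Set Xs)) : ∀ β : Ordinal.{0}, β ≤ γ → Set (Set Xs) :=
  fun β _ => if hlt : β < γ then h β hlt else 𝓤

theorem extendH_lt {γ : Ordinal.{0}} {h : ∀ β : Ordinal.{0}, β < γ → Set (Set Xs)}
    {𝓤 : Set (Set Xs)} {β : Ordinal.{0}} (hβ : β < γ) (hβ' : β ≤ γ) :
    extendH γ h 𝓤 β hβ' = h β hβ := dif_pos hβ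

theorem extendH_self {γ : Ordinal.{0}} {h : ∀ β : Ordinal.{0}, β < γ → Set (Set Xs)}
    {𝓤 : Set (Set Xs)} (hβ' : γ ≤ γ) :
    extendH γ h 𝓤 γ hβ' = 𝓤 := dif_neg (lt_irrefl γ)

/-- There is a legal move for ONE at inning `γ` forcing TWO's response into `V`. -/
def coverProp (F : TwoStrategy Xs α) (γ : Ordinal.{0}) (hγ : γ < α)
    (h : ∀ β : Ordinal.{0}, β < γ → Set (Set Xs)) (V : Set Xs) : Prop :=
  ∃ 𝓤, IsTCover (kfdSets Xs) 𝓤 ∧ F γ hγ (extendH γ h 𝓤) ⊆ V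

/-- Galvin-style key lemma: after any legal history there is a compact
finite-dimensional set `S` such that any open `V ⊇ S` can be forced. -/
theorem key_lemma (F : TwoStrategy Xs α) (hF : IsWinningTwo (kfdSets Xs) α F)
    (γ : Ordinal.{0}) (hγ : γ < α) (h : ∀ β : Ordinal.{0}, β < γ → Set (Set Xs))
    (hleg : ∀ β hβ, IsTCover (kfdSets Xs) (h β hβ)) :
    ∃ S, S ∈ kfdSets Xs ∧ ∀ V, IsOpen V → S ⊆ V → coverProp F γ hγ h V := by
  by_contra hcon
  push_neg at hcon
  choose! Vsel hVopen hVsub hVbad using hcon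
  set 𝓤S : Set (Set Xs) := Vsel '' kfdSets Xs with h𝓤S
  have hcover : IsTCover (kfdSets Xs) 𝓤S := by
    refine ⟨?_, ?_, ?_⟩
    · rintro U ⟨S, hS, rfl⟩; exact hVopen S hS
    · intro x
      exact ⟨Vsel {x}, ⟨{x}, kfd_singleton x, rfl⟩, hVsub {x} (kfd_singleton x) rfl⟩
    · intro T hT
      exact ⟨Vsel T, ⟨T, hT, rfl⟩, hVsub T hT⟩
  have hl : ∀ β hβ, IsTCover (kfdSets Xs) (extendH γ h 𝓤S β hβ) := by
    intro β hβ
    by_cases hlt : β < γ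
    · rw [extendH_lt hlt]; exact hleg β hlt
    · have : β = γ := le_antisymm hβ (not_lt.mp hlt)
      subst this
      rw [extendH_self]; exact hcover
  have hmem := hF.1 γ hγ (extendH γ h 𝓤S) hl
  rw [extendH_self] at hmem
  obtain ⟨S, hS, heq⟩ := hmem
  exact hVbad S hS ⟨𝓤S, hcover, heq ▸ subset_rfl⟩

open Classical in
/-- The compact finite-dimensional "kernel" selected after a legal history. -/
noncomputable def selS (F : TwoStrategy Xs α) (γ : Ordinal.{0}) (hγ : γ < α)
    (h : ∀ β : Ordinal.{0}, β < γ → Set (Set Xs)) : Set Xs :=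
  if p : ∃ S, S ∈ kfdSets Xs ∧ ∀ V, IsOpen V → S ⊆ V → coverProp F γ hγ h V
  then p.choose else ∅

theorem selS_spec {F : TwoStrategy Xs α} (hF : IsWinningTwo (kfdSets Xs) α F)
    {γ : Ordinal.{0}} (hγ : γ < α) {h : ∀ β : Ordinal.{0}, β < γ → Set (Set Xs)}
    (hleg : ∀ β hβ, IsTCover (kfdSets Xs) (h β hβ)) :
    selS F γ hγ h ∈ kfdSets Xs ∧
      ∀ V, IsOpen V → selS F γ hγ h ⊆ V → coverProp F γ hγ h V := by
  have p := key_lemma F hF γ hγ h hleg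
  rw [selS, dif_pos p]
  exact p.choose_spec

open Classical in
/-- ONE's simulated move, forcing TWO's response into `V` when possible. -/
noncomputable def selCover (F : TwoStrategy Xs α) (γ : Ordinal.{0}) (hγ : γ < α)
    (h : ∀ β : Ordinal.{0}, β < γ → Set (Set Xs)) (V : Set Xs) : Set (Set Xs) :=
  if q : coverProp F γ hγ h V then q.choose else {Set.univ}

theorem selCover_isTCover (F : TwoStrategy Xs α) (γ : Ordinal.{0}) (hγ : γ < α)
    (h : ∀ β : Ordinal.{0}, β < γ → Set (Set Xs)) (V : Set Xs) :
    IsTCover (kfdSets Xs) (selCover F γ hγ h V) := by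
  rw [selCover]
  split
  · next q => exact q.choose_spec.1
  · exact isTCover_univ_cover

theorem selCover_forces {F : TwoStrategy Xs α} {γ : Ordinal.{0}} {hγ : γ < α}
    {h : ∀ β : Ordinal.{0}, β < γ → Set (Set Xs)} {V : Set Xs}
    (q : coverProp F γ hγ h V) :
    F γ hγ (extendH γ h (selCover F γ hγ h V)) ⊆ V := by
  rw [selCover, dif_pos q]
  exact q.choose_spec.2

end GameMachinery
section PickU

variable {Xs : Type*}

open Classical in
noncomputable def pickU (𝓤 : Set (Set Xs)) (S : Set Xs) : Set Xs :=
  if p : ∃ U ∈ 𝓤, S ⊆ U then p.choose else ∅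

theorem pickU_spec {𝓤 : Set (Set Xs)} {S : Set Xs} (p : ∃ U ∈ 𝓤, S ⊆ U) :
    pickU 𝓤 S ∈ 𝓤 ∧ S ⊆ pickU 𝓤 S := by
  rw [pickU, dif_pos p]
  exact ⟨p.choose_spec.1, p.choose_spec.2⟩

end PickU

section Main

variable {X : Type*} [MetricSpace X] {α : Ordinal.{0}} {n : ℕ}
variable (Y : Fin n → Set X) (F : ∀ j, TwoStrategy ↥(Y j) α)

/-- The combined recursion: at inning `γ`, given ONE's history `O`, compute for each `j`
ONE's simulated move in the game on `Y j`, and TWO's actual response. -/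
noncomputable def Phi : ∀ γ : Ordinal.{0},
    γ < α → (∀ β : Ordinal.{0}, β ≤ γ → Set (Set ↥(⋃ i, Y i))) →
      ((∀ j, Set (Set ↥(Y j))) × Set ↥(⋃ i, Y i)) :=
  WellFounded.fix Ordinal.lt_wf (fun γ rec hγ O =>
    let h : ∀ j, ∀ β : Ordinal.{0}, β < γ → Set (Set ↥(Y j)) :=
      fun j β hβ => (rec β hβ (hβ.trans hγ) (fun δ hδ => O δ (hδ.trans hβ.le))).1 j
    let U : Set ↥(⋃ i, Y i) := pickU (O γ le_rfl)
      (⋃ j, Set.inclusion (Set.subset_iUnion Y j) '' selS (F j) γ hγ (h j))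
    (fun j => selCover (F j) γ hγ (h j) (Set.inclusion (Set.subset_iUnion Y j) ⁻¹' U), U))

/-- The simulated history for the game on `Y j`. -/
noncomputable def histJ (γ : Ordinal.{0}) (hγ : γ < α)
    (O : ∀ β : Ordinal.{0}, β ≤ γ → Set (Set ↥(⋃ i, Y i))) (j : Fin n) :
    ∀ β : Ordinal.{0}, β < γ → Set (Set ↥(Y j)) :=
  fun β hβ => (Phi Y F β (hβ.trans hγ) (fun δ hδ => O δ (hδ.trans hβ.le))).1 j

theorem Phi_eq (γ : Ordinal.{0}) (hγ : γ < α)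
    (O : ∀ β : Ordinal.{0}, β ≤ γ → Set (Set ↥(⋃ i, Y i))) :
    Phi Y F γ hγ O =
      (fun j => selCover (F j) γ hγ (histJ Y F γ hγ O j)
        (Set.inclusion (Set.subset_iUnion Y j) ⁻¹'
          pickU (O γ le_rfl)
            (⋃ i, Set.inclusion (Set.subset_iUnion Y i) ''
              selS (F i) γ hγ (histJ Y F γ hγ O i))),
       pickU (O γ le_rfl)
         (⋃ i, Set.inclusion (Set.subset_iUnion Y i) ''
           selS (F i) γ hγ (histJ Y F γ hγ O i))) := by
  unfold Phi
  rw [WellFounded.fix_eq]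
  rfl

theorem histJ_legal (γ : Ordinal.{0}) (hγ : γ < α)
    (O : ∀ β : Ordinal.{0}, β ≤ γ → Set (Set ↥(⋃ i, Y i))) (j : Fin n) :
    ∀ β hβ, IsTCover (kfdSets ↥(Y j)) (histJ Y F γ hγ O j β hβ) := by
  intro β hβ
  show IsTCover _ ((Phi Y F β _ _).1 j)
  rw [Phi_eq]
  exact selCover_isTCover _ _ _ _ _

theorem bigS_kfd (hF : ∀ j, IsWinningTwo (kfdSets ↥(Y j)) α (F j))
    (γ : Ordinal.{0}) (hγ : γ < α)
    (O : ∀ β : Ordinal.{0}, β ≤ γ → Set (Set ↥(⋃ i, Y i))) :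
    (⋃ i, Set.inclusion (Set.subset_iUnion Y i) ''
      selS (F i) γ hγ (histJ Y F γ hγ O i)) ∈ kfdSets ↥(⋃ i, Y i) :=
  kfd_iUnion _ fun i => kfd_inclusion _
    ((selS_spec (hF i) hγ (histJ_legal Y F γ hγ O i)).1)

/-- TWO's strategy on the union. -/
noncomputable def Gstrat : TwoStrategy ↥(⋃ i, Y i) α :=
  fun γ hγ O => (Phi Y F γ hγ O).2

theorem Gstrat_winning (hF : ∀ j, IsWinningTwo (kfdSets ↥(Y j)) α (F j)) :
    IsWinningTwo (kfdSets ↥(⋃ i, Y i)) α (Gstrat Y F) := by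
  constructor
  · -- legal responses
    intro γ hγ O hO
    have hex : ∃ U ∈ O γ le_rfl,
        (⋃ i, Set.inclusion (Set.subset_iUnion Y i) ''
          selS (F i) γ hγ (histJ Y F γ hγ O i)) ⊆ U :=
      (hO γ le_rfl).2.2 _ (bigS_kfd Y F hF γ hγ O)
    show (Phi Y F γ hγ O).2 ∈ O γ le_rfl
    rw [Phi_eq]
    exact (pickU_spec hex).1
  · -- winning
    intro O hO x
    obtain ⟨j, hj⟩ := Set.mem_iUnion.mp x.2
    have hPleg : ∀ (γ : Ordinal.{0}) (hγ : γ < α), IsTCover (kfdSets ↥(Y j))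
        ((Phi Y F γ hγ (fun β hβ => O β (lt_of_le_of_lt hβ hγ))).1 j) := by
      intro γ hγ
      rw [Phi_eq]
      exact selCover_isTCover _ _ _ _ _
    obtain ⟨γ, hγ, hy⟩ := (hF j).2
      (fun γ hγ => (Phi Y F γ hγ (fun β hβ => O β (lt_of_le_of_lt hβ hγ))).1 j)
      hPleg ⟨x.1, hj⟩
    refine ⟨γ, hγ, ?_⟩
    set O' : ∀ β : Ordinal.{0}, β ≤ γ → Set (Set ↥(⋃ i, Y i)) :=
      fun β hβ => O β (lt_of_le_of_lt hβ hγ) with hO'def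
    have hex : ∃ U ∈ O' γ le_rfl,
        (⋃ i, Set.inclusion (Set.subset_iUnion Y i) ''
          selS (F i) γ hγ (histJ Y F γ hγ O' i)) ⊆ U :=
      (hO γ hγ).2.2 _ (bigS_kfd Y F hF γ hγ O')
    have hUspec := pickU_spec hex
    have hUopen : IsOpen (pickU (O' γ le_rfl)
        (⋃ i, Set.inclusion (Set.subset_iUnion Y i) ''
          selS (F i) γ hγ (histJ Y F γ hγ O' i))) :=
      (hO γ hγ).1 _ hUspec.1
    -- the set fed to selCover
    have hq : coverProp (F j) γ hγ (histJ Y F γ hγ O' j)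
        (Set.inclusion (Set.subset_iUnion Y j) ⁻¹'
          pickU (O' γ le_rfl)
            (⋃ i, Set.inclusion (Set.subset_iUnion Y i) ''
              selS (F i) γ hγ (histJ Y F γ hγ O' i))) := by
      refine (selS_spec (hF j) hγ (histJ_legal Y F γ hγ O' j)).2 _
        (hUopen.preimage (continuous_inclusion _)) ?_
      rw [← Set.image_subset_iff]
      exact le_trans (Set.subset_iUnion
        (fun i => Set.inclusion (Set.subset_iUnion Y i) ''
          selS (F i) γ hγ (histJ Y F γ hγ O' i)) j) hUspec.2
    -- the history fed to F j is exactly the extension by selCover's move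
    have hhist : (fun (β : Ordinal.{0}) (hβ : β ≤ γ) =>
          (Phi Y F β (lt_of_le_of_lt hβ hγ)
            (fun δ hδ => O δ (lt_of_le_of_lt hδ (lt_of_le_of_lt hβ hγ)))).1 j) =
        extendH γ (histJ Y F γ hγ O' j)
          (selCover (F j) γ hγ (histJ Y F γ hγ O' j)
            (Set.inclusion (Set.subset_iUnion Y j) ⁻¹'
              pickU (O' γ le_rfl)
                (⋃ i, Set.inclusion (Set.subset_iUnion Y i) ''
                  selS (F i) γ hγ (histJ Y F γ hγ O' i)))) := by
      funext β hβ
      rcases lt_or_eq_of_le hβ with hlt | heq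
      · rw [extendH_lt hlt]
        rfl
      · subst heq
        rw [extendH_self]
        rw [Phi_eq]
    rw [hhist] at hy
    have hforce := selCover_forces hq hy
    have hmem : Set.inclusion (Set.subset_iUnion Y j) (⟨x.1, hj⟩ : ↥(Y j)) ∈
        pickU (O' γ le_rfl)
          (⋃ i, Set.inclusion (Set.subset_iUnion Y i) ''
            selS (F i) γ hγ (histJ Y F γ hγ O' i)) := hforce
    have hxeq : Set.inclusion (Set.subset_iUnion Y j) (⟨x.1, hj⟩ : ↥(Y j)) = x :=
      Subtype.ext rfl
    rw [hxeq] at hmem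
    show x ∈ (Phi Y F γ hγ O').2
    rw [Phi_eq]
    exact hmem

theorem union_twoWins (hW : ∀ j, TwoWins ↥(Y j) (kfdSets ↥(Y j)) α) :
    TwoWins ↥(⋃ i, Y i) (kfdSets ↥(⋃ i, Y i)) α :=
  ⟨Gstrat Y (fun j => (hW j).choose),
    Gstrat_winning Y _ (fun j => (hW j).choose_spec)⟩

end Main

theorem statement_5 {X : Type*} [MetricSpace X] [TopologicalSpace.SeparableSpace X]
    (α : Ordinal.{0}) (n : ℕ) (Y : Fin n → Set X)
    (h : ∀ j, TwoWins ↥(Y j) (kfdSets ↥(Y j)) α) :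
    TwoWins ↥(⋃ j, Y j) (kfdSets ↥(⋃ j, Y j)) α :=
  union_twoWins Y h
end

section
/- Let X be a separable metric space and Y a closed subspace of X. If TWO has a winning strategy in the game G_c^α(𝓞,𝓞) on X for some ordinal α, then TWO has a winning strategy in G_c^α(𝓞,𝓞) on Y; consequently dim_G(Y) ≤ dim_G(X). -/
open Set Topology

theorem statement_13 {X : Type*} [MetricSpace X] [TopologicalSpace.SeparableSpace X]
    (Y : Set X) (hY : IsClosed Y) :
    (∀ α : Ordinal.{0}, TwoWinsC X α → TwoWinsC ↥Y α) ∧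
    (∀ d : Ordinal.{0}, TPCEq X (1 + d) → TPCLe ↥Y (1 + d)) := by
  have key : ∀ α : Ordinal.{0}, TwoWinsC X α → TwoWinsC ↥Y α := by
    intro α hw
    obtain ⟨F, hF1, hF2⟩ := hw
    set p : ↥Y → X := Subtype.val with hp
    -- extend a cover of Y to a cover of X
    set e : Set (Set ↥Y) → Set (Set X) := fun 𝓤 =>
      {U' | IsOpen U' ∧ (p ⁻¹' U') ∈ 𝓤} ∪ {Yᶜ} with he_def
    have he : ∀ 𝓤 : Set (Set ↥Y), IsOpenCover 𝓤 → IsOpenCover (e 𝓤) := by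
      intro 𝓤 h
      constructor
      · intro U' hU'
        rcases hU' with ⟨h1, _⟩ | h2
        · exact h1
        · simp only [mem_singleton_iff] at h2
          exact h2 ▸ hY.isOpen_compl
      · intro x
        by_cases hx : x ∈ Y
        · obtain ⟨U, hU𝓤, hxU⟩ := h.2 ⟨x, hx⟩
          obtain ⟨U', hU'o, hU'e⟩ := isOpen_induced_iff.mp (h.1 U hU𝓤)
          refine ⟨U', Or.inl ⟨hU'o, ?_⟩, ?_⟩
          · rw [hU'e]; exact hU𝓤
          · have : (⟨x, hx⟩ : ↥Y) ∈ p ⁻¹' U' := by rw [hp, hU'e]; exact hxU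
            exact this
        · exact ⟨Yᶜ, Or.inr rfl, hx⟩
    refine ⟨fun γ hγ O =>
      {W | ∃ V ∈ F γ hγ (fun β hβ => e (O β hβ)), W = p ⁻¹' V ∧
        ∃ U ∈ O γ le_rfl, W ⊆ U}, ?_, ?_⟩
    · intro γ hγ O hO
      have hleg := hF1 γ hγ (fun β hβ => e (O β hβ)) (fun β hβ => he _ (hO β hβ))
      refine ⟨?_, ?_, ?_⟩
      · rintro W ⟨V, hV, rfl, _⟩
        exact (hleg.1 V hV).preimage continuous_subtype_val
      · rintro W₁ ⟨V₁, hV₁, rfl, _⟩ W₂ ⟨V₂, hV₂, rfl, _⟩ hne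
        have hVne : V₁ ≠ V₂ := fun h => hne (by rw [h])
        exact Disjoint.preimage _ (hleg.2.1 hV₁ hV₂ hVne)
      · rintro W ⟨V, hV, rfl, U, hU, hsub⟩
        exact ⟨U, hU, hsub⟩
    · intro O hO x
      obtain ⟨γ, hγ, V, hV, hxV⟩ :=
        hF2 (fun γ hγ => e (O γ hγ)) (fun γ hγ => he _ (hO γ hγ)) (↑x)
      have hleg := hF1 γ hγ (fun β hβ => e (O β (lt_of_le_of_lt hβ hγ)))
        (fun β hβ => he _ (hO β (lt_of_le_of_lt hβ hγ)))
      obtain ⟨U', hU', hsub⟩ := hleg.2.2 V hV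
      rcases hU' with ⟨hU'o, hmem⟩ | hYc
      · refine ⟨γ, hγ, p ⁻¹' V, ⟨V, hV, rfl, p ⁻¹' U', hmem, preimage_mono hsub⟩, hxV⟩
      · simp only [mem_singleton_iff] at hYc
        have : (↑x : X) ∈ Yᶜ := hYc ▸ hsub hxV
        exact absurd x.2 this
  refine ⟨key, fun d hd => ⟨1 + d, le_rfl, key _ hd.1⟩⟩
end

section
/- For a separable metric space X the following are equivalent: (1) X satisfies S_c(𝓞,𝓞); (2) X satisfies S_c(𝓞_kfd,𝓞); (3) X satisfies S_c(𝓞_fd,𝓞). -/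
open Set Topology

/-- The selection principle `S_c(𝓐,𝓞)`. -/
def ScSel (X : Type*) [TopologicalSpace X] (𝓐 : Set (Set (Set X))) : Prop :=
  ∀ A : ℕ → Set (Set X), (∀ n, A n ∈ 𝓐) →
    ∃ B : ℕ → Set (Set X),
      (∀ n, (∀ V ∈ B n, IsOpen V) ∧ (B n).Pairwise Disjoint ∧
        ∀ V ∈ B n, ∃ U ∈ A n, V ⊆ U) ∧
      ∀ x : X, ∃ n, ∃ V ∈ B n, x ∈ V


noncomputable section

namespace SCproof

open EMetric ENNReal

variable {X : Type*} [MetricSpace X]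

variable {X : Type*} [MetricSpace X]

/-- `F x ≤ F y + edist x y` type functions. -/
def Lip1 (F : X → ℝ≥0∞) : Prop := ∀ x y : X, F x ≤ F y + edist x y

lemma Lip1.const (c : ℝ≥0∞) : Lip1 (fun _ : X => c) := fun _ _ => le_self_add

lemma Lip1.min {F G : X → ℝ≥0∞} (hF : Lip1 F) (hG : Lip1 G) :
    Lip1 (fun x => min (F x) (G x)) := by
  intro x y
  rcases le_total (F y) (G y) with h | h
  · simp only [min_eq_left h]
    exact (min_le_left _ _).trans (hF x y)
  · simp only [min_eq_right h]
    exact (min_le_right _ _).trans (hG x y)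

lemma Lip1.infEdist (s : Set X) : Lip1 (fun x => infEdist x s) := by
  intro x y; exact infEdist_le_infEdist_add_edist

lemma isOpen_lt_of_lip {F G : X → ℝ≥0∞} (hF : Lip1 F) (hG : Lip1 G)
    (hFfin : ∀ x, F x ≠ ⊤) : IsOpen {x | F x < G x} := by
  rw [EMetric.isOpen_iff]
  intro x hx
  have hx' : F x < G x := hx
  rcases eq_or_ne (G x) ⊤ with hGt | hGt
  · refine ⟨1, one_pos, fun y hy => ?_⟩
    have hyx : edist x y < 1 := by rwa [mem_ball, edist_comm] at hy
    have hGy : G y = ⊤ := by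
      by_contra h
      have hne : G y + edist x y ≠ ⊤ :=
        ENNReal.add_ne_top.mpr ⟨h, hyx.ne_top⟩
      exact hne (top_le_iff.mp (hGt ▸ hG x y))
    have hFy : F y < ⊤ := by
      have := hF y x
      rw [edist_comm] at this
      exact lt_of_le_of_lt this
        (ENNReal.add_lt_top.mpr ⟨(hFfin x).lt_top, hyx.trans_le le_top⟩)
    simpa [mem_setOf_eq, hGy] using hFy
  · set e : ℝ≥0∞ := (G x - F x) / 2 with he
    have hsub0 : G x - F x ≠ 0 := by
      simpa [tsub_eq_zero_iff_le] using not_le.mpr hx'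
    have he0 : e ≠ 0 := by
      simp [he, ENNReal.div_eq_zero_iff, hsub0]
    have hee : e ≠ ⊤ := by
      refine (ENNReal.div_lt_top ?_ (by norm_num)).ne
      exact (ENNReal.sub_ne_top hGt)
    refine ⟨e, pos_iff_ne_zero.mpr he0, fun y hy => ?_⟩
    have hyx : edist y x < e := by rwa [mem_ball] at hy
    have key : F x + (e + e) ≤ G x := by
      have h2 : e + e = G x - F x := by
        rw [he, ← two_mul, ENNReal.mul_div_cancel' (by norm_num) (by norm_num)]
      rw [h2, add_tsub_cancel_of_le hx'.le]
    have h3 : G x ≤ G y + e := by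
      have := hG x y
      rw [edist_comm] at this
      exact this.trans (add_le_add_right hyx.le _)
    have h5 : F x + e ≤ G y := by
      have h4 : (F x + e) + e ≤ G y + e := by
        calc (F x + e) + e = F x + (e + e) := by ring
          _ ≤ G x := key
          _ ≤ G y + e := h3
      exact (ENNReal.add_le_add_iff_right hee).mp h4
    have h6 : F y < F x + e := by
      calc F y ≤ F x + edist y x := hF y x
      _ < F x + e := (ENNReal.add_lt_add_iff_left (hFfin x)).mpr hyx
    exact h6.trans_le h5

lemma isClosed_le_of_lip {F G : X → ℝ≥0∞} (hF : Lip1 F) (hG : Lip1 G)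
    (hGfin : ∀ x, G x ≠ ⊤) : IsClosed {x | F x ≤ G x} := by
  have : {x : X | F x ≤ G x} = {x | G x < F x}ᶜ := by
    ext x; simp [not_lt]
  rw [this]
  exact (isOpen_lt_of_lip hG hF hGfin).isClosed_compl

/-! ### depth functions -/

/-- depth of `x` in `S i`, capped at `2⁻¹ ^ i`. -/
def gdep (S : ℕ → Set X) (i : ℕ) (x : X) : ℝ≥0∞ :=
  min (2⁻¹ ^ i) (infEdist x (S i)ᶜ)

/-- total depth function of the family `S`. -/
def hdep (S : ℕ → Set X) (x : X) : ℝ≥0∞ := ⨆ i, gdep S i x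

lemma gdep_lip (S : ℕ → Set X) (i : ℕ) : Lip1 (gdep S i) :=
  Lip1.min (Lip1.const _) (Lip1.infEdist _)

lemma gdep_le (S : ℕ → Set X) (i : ℕ) (x : X) : gdep S i x ≤ 2⁻¹ ^ i := min_le_left _ _

lemma gdep_le_one (S : ℕ → Set X) (i : ℕ) (x : X) : gdep S i x ≤ 1 :=
  (gdep_le S i x).trans (pow_le_one₀ zero_le (by norm_num))

lemma gdep_ne_top (S : ℕ → Set X) (i : ℕ) (x : X) : gdep S i x ≠ ⊤ :=
  ((gdep_le_one S i x).trans_lt one_lt_top).ne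

lemma hdep_le_one (S : ℕ → Set X) (x : X) : hdep S x ≤ 1 :=
  iSup_le fun i => gdep_le_one S i x

lemma hdep_ne_top (S : ℕ → Set X) (x : X) : hdep S x ≠ ⊤ :=
  ((hdep_le_one S x).trans_lt one_lt_top).ne

lemma hdep_lip (S : ℕ → Set X) : Lip1 (hdep S) := by
  intro x y
  refine iSup_le fun i => (gdep_lip S i x y).trans (add_le_add_left ?_ _)
  exact le_iSup (fun j => gdep S j y) i

lemma gdep_pos_mem {S : ℕ → Set X} {i : ℕ} {x : X} (h : 0 < gdep S i x) : x ∈ S i := by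
  have h2 : 0 < infEdist x (S i)ᶜ := lt_of_lt_of_le h (min_le_right _ _)
  by_contra hx
  rw [← EMetric.infEdist_zero_of_mem (show x ∈ (S i)ᶜ from hx)] at h2
  exact lt_irrefl _ h2

lemma gdep_pos_of_mem {S : ℕ → Set X} (hS : ∀ i, IsOpen (S i)) {i : ℕ} {x : X}
    (h : x ∈ S i) : 0 < gdep S i x := by
  rw [gdep, lt_min_iff]
  constructor
  · rw [pos_iff_ne_zero]
    exact pow_ne_zero _ (by norm_num)
  · rw [pos_iff_ne_zero]
    intro h0
    have : x ∈ closure (S i)ᶜ := EMetric.mem_closure_iff_infEdist_zero.mpr h0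
    rw [(hS i).isClosed_compl.closure_eq] at this
    exact this h

lemma hdep_pos_iff {S : ℕ → Set X} (hS : ∀ i, IsOpen (S i)) (x : X) :
    0 < hdep S x ↔ x ∈ ⋃ i, S i := by
  constructor
  · intro h
    rw [hdep, lt_iSup_iff] at h
    obtain ⟨i, hi⟩ := h
    exact mem_iUnion.mpr ⟨i, gdep_pos_mem hi⟩
  · intro h
    obtain ⟨i, hi⟩ := mem_iUnion.mp h
    exact lt_of_lt_of_le (gdep_pos_of_mem hS hi) (le_iSup (fun j => gdep S j x) i)

lemma exists_gdep_gt_half {S : ℕ → Set X} {x : X} (h : 0 < hdep S x) :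
    ∃ i, hdep S x / 2 < gdep S i x := by
  have : hdep S x / 2 < hdep S x :=
    ENNReal.half_lt_self h.ne' (hdep_ne_top S x)
  rw [hdep, lt_iSup_iff] at this
  exact this

/-- index bound: if `gdep S i x > c` then `2⁻¹ ^ i > c`. -/
lemma gdep_index_bound {S : ℕ → Set X} {i : ℕ} {x : X} {c : ℝ≥0∞}
    (h : c < gdep S i x) : c < 2⁻¹ ^ i := h.trans_le (gdep_le S i x)

lemma pow_half_le_of_le {i N : ℕ} (h : N ≤ i) : (2⁻¹ : ℝ≥0∞) ^ i ≤ 2⁻¹ ^ N := by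
  calc (2⁻¹:ℝ≥0∞) ^ i = 2⁻¹ ^ N * 2⁻¹ ^ (i - N) := by
        rw [← pow_add]; congr 1; omega
    _ ≤ 2⁻¹ ^ N * 1 := by
        gcongr
        exact pow_le_one₀ zero_le (by norm_num)
    _ = 2⁻¹ ^ N := mul_one _

/-- if `2⁻¹ ^ N < c ≤ 2⁻¹ ^ i` then `i < N`. -/
lemma index_lt_of_pow {i N : ℕ} {c : ℝ≥0∞} (hN : 2⁻¹ ^ N < c) (hi : c ≤ 2⁻¹ ^ i) : i < N := by
  by_contra h
  push_neg at h
  exact absurd (hi.trans (pow_half_le_of_le h)) (not_le.mpr hN)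




/-- Ambient form of covering dimension `≤ d` of the subset `T`. -/
def CovShrink (T : Set X) (d : ℕ) : Prop :=
  ∀ (p : ℕ) (O : ℕ → Set X), (∀ i, IsOpen (O i)) → (∀ i, p ≤ i → O i = ∅) →
    (T ⊆ ⋃ i, O i) →
    ∃ P : ℕ → Set X, (∀ i, IsOpen (P i)) ∧ (∀ i, P i ⊆ O i) ∧ (T ⊆ ⋃ i, P i) ∧
      ∀ x ∈ T, {i | x ∈ P i}.ncard ≤ d + 1

lemma covShrink_of_covDimLE {T : Set X} {d : ℕ} (h : CovDimLE T d) : CovShrink T d := by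
  classical
  intro p O hO hsupp hcov
  -- the trace cover on the subtype
  set 𝓤 : Set (Set T) := (fun i => (Subtype.val : T → X) ⁻¹' O i) '' (Set.Iio p) with h𝓤
  have h𝓤fin : 𝓤.Finite := (Set.finite_Iio p).image _
  have h𝓤o : ∀ U ∈ 𝓤, IsOpen U := by
    rintro U ⟨i, -, rfl⟩
    exact (hO i).preimage continuous_subtype_val
  have h𝓤cov : ⋃₀ 𝓤 = Set.univ := by
    ext x
    simp only [Set.mem_sUnion, Set.mem_univ, iff_true]
    obtain ⟨i, hi⟩ := Set.mem_iUnion.mp (hcov x.2)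
    have hip : i < p := by
      by_contra hip
      rw [hsupp i (le_of_not_gt hip)] at hi
      exact hi
    exact ⟨_, ⟨i, hip, rfl⟩, hi⟩
  obtain ⟨𝓥, h𝓥o, h𝓥cov, h𝓥ref, h𝓥pt⟩ := h 𝓤 h𝓤fin h𝓤o h𝓤cov
  -- choice of representative open sets and assigned indices
  have hch : ∀ V : Set T, ∃ (U : Set X) (i : ℕ),
      V ∈ 𝓥 → (IsOpen U ∧ (Subtype.val ⁻¹' U = V) ∧ i < p ∧ V ⊆ Subtype.val ⁻¹' O i) := by
    intro V
    by_cases hV : V ∈ 𝓥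
    · obtain ⟨U', hU'⟩ := isOpen_induced_iff.mp (h𝓥o V hV)
      obtain ⟨u, hu, hVu⟩ := h𝓥ref V hV
      obtain ⟨i, hip, rfl⟩ := hu
      exact ⟨U', i, fun _ => ⟨hU'.1, hU'.2, hip, hVu⟩⟩
    · exact ⟨∅, 0, fun hV' => absurd hV' hV⟩
  choose Ufn ifn hUfn using hch
  set P : ℕ → Set X := fun i => ⋃ V ∈ {V ∈ 𝓥 | ifn V = i}, (Ufn V ∩ O i) with hP
  refine ⟨P, ?_, ?_, ?_, ?_⟩
  · intro i
    refine isOpen_biUnion ?_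
    rintro V ⟨hV, -⟩
    exact ((hUfn V hV).1).inter (hO i)
  · intro i
    refine Set.iUnion₂_subset ?_
    rintro V ⟨hV, rfl⟩
    exact Set.inter_subset_right
  · intro x hx
    have hxT : (⟨x, hx⟩ : T) ∈ ⋃₀ 𝓥 := by rw [h𝓥cov]; trivial
    obtain ⟨V, hV, hxV⟩ := hxT
    obtain ⟨hUo, hUeq, hip, hVO⟩ := hUfn V hV
    refine Set.mem_iUnion.mpr ⟨ifn V, ?_⟩
    refine Set.mem_biUnion ⟨hV, rfl⟩ ?_
    refine ⟨?_, ?_⟩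
    · rw [← hUeq] at hxV; exact hxV
    · exact hVO hxV
  · intro x hx
    -- inject indices into the sets of 𝓥 containing x
    have key : ∀ i ∈ {i | x ∈ P i}, ∃ V, (V ∈ 𝓥 ∧ (⟨x, hx⟩ : T) ∈ V) ∧ ifn V = i := by
      intro i hi
      simp only [hP, Set.mem_setOf_eq, Set.mem_iUnion] at hi
      obtain ⟨V, ⟨hV, hVi⟩, hxV⟩ := hi
      obtain ⟨hUo, hUeq, hip, hVO⟩ := hUfn V hV
      refine ⟨V, ⟨hV, ?_⟩, hVi⟩
      rw [← hUeq]
      exact hxV.1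
    choose W hW hWi using key
    have hptx := h𝓥pt (⟨x, hx⟩ : T)
    calc {i | x ∈ P i}.ncard
        ≤ {V | V ∈ 𝓥 ∧ (⟨x, hx⟩ : T) ∈ V}.ncard := by
          refine Set.ncard_le_ncard_of_injOn (fun i => if h : i ∈ {i | x ∈ P i} then W i h else ∅)
            ?_ ?_ hptx.1
          · intro i hi; simp only [dif_pos hi]; exact hW i hi
          · intro i hi j hj hij
            simp only [dif_pos hi, dif_pos hj] at hij
            rw [← hWi i hi, ← hWi j hj, hij]
      _ ≤ d + 1 := hptx.2

lemma covShrink_inter_closed {T : Set X} {d : ℕ} (h : CovShrink T d) {C : Set X}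
    (hC : IsClosed C) : CovShrink (T ∩ C) d := by
  intro p O hO hsupp hcov
  set O' : ℕ → Set X := fun i => if i < p then O i else if i = p then Cᶜ else ∅ with hO'
  have hO'o : ∀ i, IsOpen (O' i) := by
    intro i
    simp only [hO']
    split
    · exact hO i
    · split
      · exact hC.isOpen_compl
      · exact isOpen_empty
  have hO'supp : ∀ i, p + 1 ≤ i → O' i = ∅ := by
    intro i hi
    simp only [hO']
    rw [if_neg (by omega), if_neg (by omega)]
  have hO'cov : T ⊆ ⋃ i, O' i := by
    intro x hx
    by_cases hxC : x ∈ C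
    · obtain ⟨i, hi⟩ := Set.mem_iUnion.mp (hcov ⟨hx, hxC⟩)
      have hip : i < p := by
        by_contra hip
        rw [hsupp i (le_of_not_gt hip)] at hi
        exact hi
      exact Set.mem_iUnion.mpr ⟨i, by simpa [hO', hip] using hi⟩
    · refine Set.mem_iUnion.mpr ⟨p, ?_⟩
      simp [hO', hxC]
  obtain ⟨P', hP'o, hP'sub, hP'cov, hP'card⟩ := h (p + 1) O' hO'o hO'supp hO'cov
  set P : ℕ → Set X := fun i => if i < p then P' i else ∅ with hPdef
  refine ⟨P, ?_, ?_, ?_, ?_⟩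
  · intro i; simp only [hPdef]; split; exacts [hP'o i, isOpen_empty]
  · intro i
    simp only [hPdef]
    split
    · have := hP'sub i
      simpa [hO', *] using this
    · exact Set.empty_subset _
  · rintro x ⟨hxT, hxC⟩
    obtain ⟨i, hi⟩ := Set.mem_iUnion.mp (hP'cov hxT)
    have hip : i < p := by
      rcases lt_trichotomy i p with h1 | h1 | h1
      · exact h1
      · exfalso
        have := hP'sub i hi
        rw [hO'] at this
        simp only [h1] at this
        simp at this
        exact this hxC
      · exfalso
        have := hP'sub i hi
        rw [hO'supp i (by omega)] at this
        exact this
    exact Set.mem_iUnion.mpr ⟨i, by simpa [hPdef, hip] using hi⟩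
  · intro x hx
    refine le_trans (Set.ncard_le_ncard ?_ ?_) (hP'card x hx.1)
    · intro i hi
      simp only [hPdef, Set.mem_setOf_eq] at hi ⊢
      by_cases hip : i < p
      · rw [if_pos hip] at hi; exact hi
      · rw [if_neg hip] at hi; exact absurd hi (Set.notMem_empty x)
    · refine Set.Finite.subset (Set.finite_Iio (p+1)) ?_
      intro i hi
      simp only [Set.mem_setOf_eq] at hi
      by_contra hip
      simp only [Set.mem_Iio, not_lt] at hip
      have := hP'sub i hi
      rw [hO'supp i hip] at this
      exact this

/-! ### the Q family -/


/-- canonical locally-finite-at-`T` shrinking of a countable open family. -/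
def Qfam (O : ℕ → Set X) : ℕ → Set X := fun i => {x | hdep O x / 2 < gdep O i x}

lemma lip_hdep_div (S : ℕ → Set X) (c : ℝ≥0∞) (hc : 1 ≤ c) : Lip1 (fun x => hdep S x / c) := by
  intro x y
  calc hdep S x / c ≤ (hdep S y + edist x y) / c := by gcongr; exact hdep_lip S x y
    _ = hdep S y / c + edist x y / c := by rw [ENNReal.add_div]
    _ ≤ hdep S y / c + edist x y := by
        gcongr
        rw [ENNReal.div_eq_inv_mul]
        exact mul_le_of_le_one_left' (by
          rw [ENNReal.inv_le_one]
          exact hc)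

lemma hdep_div_ne_top (S : ℕ → Set X) (c : ℝ≥0∞) (hc : c ≠ 0) (x : X) : hdep S x / c ≠ ⊤ := by
  intro h
  rcases ENNReal.div_eq_top.mp h with ⟨-, h1⟩ | ⟨h1, -⟩
  · exact hc h1
  · exact hdep_ne_top S x h1

lemma Qfam_isOpen (O : ℕ → Set X) (i : ℕ) : IsOpen (Qfam O i) :=
  isOpen_lt_of_lip (lip_hdep_div O 2 (by norm_num)) (gdep_lip O i)
    (hdep_div_ne_top O 2 (by norm_num))

lemma Qfam_subset (O : ℕ → Set X) (i : ℕ) : Qfam O i ⊆ O i := by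
  intro x hx
  exact gdep_pos_mem (lt_of_le_of_lt zero_le hx)

lemma Qfam_cov {T : Set X} {O : ℕ → Set X} (hOo : ∀ i, IsOpen (O i))
    (hOcov : T ⊆ ⋃ i, O i) : T ⊆ ⋃ i, Qfam O i := by
  intro x hx
  have h0 : 0 < hdep O x := (hdep_pos_iff hOo x).mpr (hOcov hx)
  obtain ⟨i, hi⟩ := exists_gdep_gt_half h0
  exact Set.mem_iUnion.mpr ⟨i, hi⟩

lemma mem_Qfam_bound {O : ℕ → Set X} {i : ℕ} {x : X} (h : x ∈ Qfam O i) :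
    hdep O x / 2 < 2⁻¹ ^ i := lt_of_lt_of_le h (gdep_le O i x)

lemma Qfam_finite_mem {O : ℕ → Set X} {x : X} (h : 0 < hdep O x) :
    {i | x ∈ Qfam O i}.Finite := by
  have h2 : hdep O x / 2 ≠ 0 := by
    intro hh
    rcases ENNReal.div_eq_zero_iff.mp hh with hh1 | hh1
    · exact h.ne' hh1
    · norm_num at hh1
  obtain ⟨N, hN⟩ := ENNReal.exists_inv_two_pow_lt h2
  refine (Set.finite_Iio N).subset ?_
  intro i hi
  simp only [Set.mem_Iio]
  simp only [Set.mem_setOf_eq] at hi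
  exact index_lt_of_pow hN (mem_Qfam_bound hi).le

/-! ### stage machinery -/

/-- base invariant for the stage families. -/
def StBase (T : Set X) (O : ℕ → Set X) (B : ℕ → Set X) : Prop :=
  (∀ i, IsOpen (B i)) ∧ (∀ i, B i ⊆ Qfam O i) ∧ (T ⊆ ⋃ i, B i)

lemma step_ex {T : Set X} {d : ℕ} (hT : CovShrink T d) (O : ℕ → Set X)
    (m : ℕ) (B : ℕ → Set X) :
    ∃ B' : ℕ → Set X, StBase T O B →
      (StBase T O B' ∧
        (∀ x ∈ T, 2⁻¹ ^ m ≤ hdep O x → {i | x ∈ B' i}.ncard ≤ d + 1) ∧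
        (∀ i, B' i ⊆ B i) ∧
        (∀ i, ∀ x ∈ T, x ∈ closure (B' i) → x ∈ B i)) := by
  by_cases hB : StBase T O B
  swap
  · exact ⟨B, fun h => absurd h hB⟩
  obtain ⟨hBo, hBQ, hBcov⟩ := hB
  -- the closed piece
  set C : Set X := {x | 2⁻¹ ^ m ≤ hdep O x} with hC
  have hCc : IsClosed C :=
    isClosed_le_of_lip (Lip1.const _) (hdep_lip O) (hdep_ne_top O)
  have hTC : CovShrink (T ∩ C) d := covShrink_inter_closed hT hCc
  -- index bound on the piece
  have hidx : ∀ x ∈ C, ∀ i, x ∈ Qfam O i → i ≤ m := by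
    intro x hx i hxi
    have h1 : (2⁻¹ : ℝ≥0∞) ^ (m + 1) ≤ hdep O x / 2 := by
      rw [pow_succ]
      calc (2⁻¹:ℝ≥0∞) ^ m * 2⁻¹ = 2⁻¹ ^ m / 2 := by
            rw [ENNReal.div_eq_inv_mul, mul_comm]
        _ ≤ hdep O x / 2 := by gcongr; exact hx
    have h2 := mem_Qfam_bound hxi
    have := index_lt_of_pow (lt_of_le_of_lt h1 h2) (le_refl ((2:ℝ≥0∞)⁻¹ ^ i))
    omega
  set O' : ℕ → Set X := fun i => if i ≤ m then B i else ∅ with hO'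
  have hO'o : ∀ i, IsOpen (O' i) := by
    intro i; simp only [hO']; split; exacts [hBo i, isOpen_empty]
  have hO'supp : ∀ i, m + 1 ≤ i → O' i = ∅ := by
    intro i hi; simp only [hO']; rw [if_neg (by omega)]
  have hO'cov : T ∩ C ⊆ ⋃ i, O' i := by
    rintro x ⟨hxT, hxC⟩
    obtain ⟨i, hi⟩ := Set.mem_iUnion.mp (hBcov hxT)
    have him : i ≤ m := hidx x hxC i (hBQ i hi)
    exact Set.mem_iUnion.mpr ⟨i, by simpa [hO', him] using hi⟩
  obtain ⟨P, hPo, hPsub, hPcov, hPcard⟩ := hTC (m + 1) O' hO'o hO'supp hO'cov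
  have hPB : ∀ i, i ≤ m → P i ⊆ B i := by
    intro i hi
    have := hPsub i
    simpa [hO', hi] using this
  have hPempty : ∀ i, m < i → P i = ∅ := by
    intro i hi
    have := hPsub i
    rw [hO'supp i (by omega)] at this
    exact Set.subset_empty_iff.mp this
  -- intermediate family
  set B1 : ℕ → Set X := fun i => if i ≤ m then P i ∪ (B i \ C) else B i with hB1
  have hB1o : ∀ i, IsOpen (B1 i) := by
    intro i; simp only [hB1]; split
    · exact (hPo i).union ((hBo i).sdiff hCc)
    · exact hBo i
  have hB1B : ∀ i, B1 i ⊆ B i := by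
    intro i; simp only [hB1]; split
    · exact Set.union_subset (hPB i (by omega)) Set.diff_subset
    · exact le_refl _
  have hB1Q : ∀ i, B1 i ⊆ Qfam O i := fun i => (hB1B i).trans (hBQ i)
  have hB1cov : T ⊆ ⋃ i, B1 i := by
    intro x hx
    by_cases hxC : x ∈ C
    · obtain ⟨i, hi⟩ := Set.mem_iUnion.mp (hPcov ⟨hx, hxC⟩)
      have him : i ≤ m := by
        by_contra hc
        rw [hPempty i (by omega)] at hi
        exact hi
      refine Set.mem_iUnion.mpr ⟨i, ?_⟩
      simp only [hB1, if_pos him]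
      exact Set.mem_union_left _ hi
    · obtain ⟨i, hi⟩ := Set.mem_iUnion.mp (hBcov hx)
      refine Set.mem_iUnion.mpr ⟨i, ?_⟩
      simp only [hB1]
      split
      · exact Set.mem_union_right _ ⟨hi, hxC⟩
      · exact hi
  have hB1P : ∀ x ∈ C, ∀ i, x ∈ B1 i → x ∈ P i := by
    intro x hxC i hxi
    simp only [hB1] at hxi
    by_cases him : i ≤ m
    · rw [if_pos him] at hxi
      rcases hxi with h | h
      · exact h
      · exact absurd hxC h.2
    · rw [if_neg him] at hxi
      exact absurd (hidx x hxC i (hBQ i hxi)) him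
  have hPfin : ∀ x, {i | x ∈ P i}.Finite := by
    intro x
    refine (Set.finite_Iio (m+1)).subset ?_
    intro i hi
    simp only [Set.mem_setOf_eq] at hi
    by_contra hc
    simp only [Set.mem_Iio, not_lt] at hc
    rw [hPempty i (by omega)] at hi
    exact hi
  -- final family: canonical closure-shrinking of B1
  set B' : ℕ → Set X := fun i => {x | hdep B1 x / 3 < gdep B1 i x} with hB'
  have hB'o : ∀ i, IsOpen (B' i) :=
    fun i => isOpen_lt_of_lip (lip_hdep_div B1 3 (by norm_num)) (gdep_lip B1 i)
      (hdep_div_ne_top B1 3 (by norm_num))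
  have hB'B1 : ∀ i, B' i ⊆ B1 i := by
    intro i x hx
    exact gdep_pos_mem (lt_of_le_of_lt zero_le hx)
  have hB'cov : T ⊆ ⋃ i, B' i := by
    intro x hx
    have h0 : 0 < hdep B1 x := (hdep_pos_iff hB1o x).mpr (hB1cov hx)
    obtain ⟨i, hi⟩ := exists_gdep_gt_half h0
    refine Set.mem_iUnion.mpr ⟨i, ?_⟩
    have : hdep B1 x / 3 ≤ hdep B1 x / 2 := by gcongr <;> norm_num
    exact lt_of_le_of_lt this hi
  have hlink : ∀ i, ∀ x ∈ T, x ∈ closure (B' i) → x ∈ B1 i := by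
    intro i x hxT hxcl
    have h0 : 0 < hdep B1 x := (hdep_pos_iff hB1o x).mpr (hB1cov hxT)
    have key : hdep B1 x ≤ 3 * gdep B1 i x := by
      refine ENNReal.le_of_forall_pos_le_add ?_
      intro ε hε hfin
      have hε4 : (0:ℝ≥0∞) < (ε : ℝ≥0∞) / 4 := by
        simp only [ENNReal.div_pos_iff]
        exact ⟨by exact_mod_cast hε.ne', by norm_num⟩
      obtain ⟨y, hy, hxy⟩ := EMetric.mem_closure_iff.mp hxcl ((ε:ℝ≥0∞)/4) hε4
      have hy' : hdep B1 y / 3 < gdep B1 i y := hy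
      have h1 : hdep B1 x ≤ hdep B1 y + (ε:ℝ≥0∞)/4 :=
        (hdep_lip B1 x y).trans (add_le_add_right hxy.le _)
      have h2 : hdep B1 y < 3 * gdep B1 i y := by
        rw [ENNReal.div_lt_iff (by norm_num) (by norm_num)] at hy'
        rw [mul_comm] at hy'
        exact hy'
      have h3 : gdep B1 i y ≤ gdep B1 i x + (ε:ℝ≥0∞)/4 := by
        have h4 := gdep_lip B1 i y x
        rw [edist_comm y x] at h4
        exact h4.trans (add_le_add_right hxy.le _)
      have h5 : (3:ℝ≥0∞) * (ε/4) + ε/4 = ε := by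
        calc (3:ℝ≥0∞) * ((ε:ℝ≥0∞)/4) + ε/4 = 4 * ((ε:ℝ≥0∞)/4) := by ring
          _ = ε := ENNReal.mul_div_cancel' (by norm_num) (by norm_num)
      calc hdep B1 x ≤ hdep B1 y + ε/4 := h1
        _ ≤ 3 * gdep B1 i y + ε/4 := add_le_add_left h2.le _
        _ ≤ 3 * (gdep B1 i x + ε/4) + ε/4 := add_le_add_left (mul_le_mul_right h3 _) _
        _ = 3 * gdep B1 i x + (3 * (ε/4) + ε/4) := by ring
        _ ≤ 3 * gdep B1 i x + ε := add_le_add_right (le_of_eq h5) _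
    have hpos : 0 < gdep B1 i x := by
      by_contra hc
      push_neg at hc
      have : gdep B1 i x = 0 := le_antisymm hc zero_le
      rw [this, mul_zero] at key
      exact absurd (lt_of_lt_of_le h0 key) (lt_irrefl _)
    exact gdep_pos_mem hpos
  refine ⟨B', fun _ => ⟨⟨hB'o, fun i => (hB'B1 i).trans (hB1Q i), hB'cov⟩, ?_, ?_, ?_⟩⟩
  · -- order at level m
    intro x hxT hxm
    have hxC : x ∈ C := hxm
    have hsub : {i | x ∈ B' i} ⊆ {i | x ∈ P i} := by
      intro i hi
      exact hB1P x hxC i (hB'B1 i hi)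
    exact le_trans (Set.ncard_le_ncard hsub (hPfin x)) (hPcard x ⟨hxT, hxC⟩)
  · exact fun i => (hB'B1 i).trans (hB1B i)
  · intro i x hxT hxcl
    exact hB1B i (hlink i x hxT hxcl)

lemma exists_good_A {T : Set X} {d : ℕ} (hT : CovShrink T d) (O : ℕ → Set X)
    (hOo : ∀ i, IsOpen (O i)) (hOcov : T ⊆ ⋃ i, O i) :
    ∃ A : ℕ → Set X,
      (∀ i, A i ⊆ O i) ∧
      (∀ x ∈ T, ∃ i, x ∈ A i) ∧
      (∀ x ∈ T, ({i | x ∈ A i}).Finite ∧ {i | x ∈ A i}.ncard ≤ d + 1) ∧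
      (∀ x ∈ T, ∀ j, x ∉ A j → 0 < infEdist x (A j)) ∧
      (∀ x ∈ T, ∃ (N : ℕ) (ε : ℝ≥0∞), 0 < ε ∧ ∀ j, N ≤ j → ε ≤ infEdist x (A j)) := by
  classical
  -- the stage sequence
  set seq : ℕ → ℕ → Set X :=
    fun m => Nat.rec (Qfam O) (fun m ih => (step_ex hT O m ih).choose) m with hseq
  have hseq0 : seq 0 = Qfam O := rfl
  have hseqS : ∀ m, seq (m + 1) = (step_ex hT O m (seq m)).choose := fun m => rfl
  have hbase : ∀ m, StBase T O (seq m) := by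
    intro m
    induction m with
    | zero =>
      exact ⟨Qfam_isOpen O, fun i => le_refl _, Qfam_cov hOo hOcov⟩
    | succ m ih =>
      rw [hseqS m]
      exact ((step_ex hT O m (seq m)).choose_spec ih).1
  have hspec : ∀ m, (StBase T O (seq (m+1)) ∧
      (∀ x ∈ T, 2⁻¹ ^ m ≤ hdep O x → {i | x ∈ seq (m+1) i}.ncard ≤ d + 1) ∧
      (∀ i, seq (m+1) i ⊆ seq m i) ∧
      (∀ i, ∀ x ∈ T, x ∈ closure (seq (m+1) i) → x ∈ seq m i)) := by
    intro m
    rw [hseqS m]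
    exact (step_ex hT O m (seq m)).choose_spec (hbase m)
  have hmono : ∀ m m', m ≤ m' → ∀ i, seq m' i ⊆ seq m i := by
    intro m m' h
    induction m' with
    | zero =>
      have : m = 0 := by omega
      subst this; exact fun i => le_refl _
    | succ k ih =>
      rcases Nat.lt_or_ge m (k+1) with h1 | h1
      · intro i
        exact ((hspec k).2.2.1 i).trans (ih (by omega) i)
      · have : m = k + 1 := by omega
        subst this; exact fun i => le_refl _
  have hAseqQ : ∀ m i, seq m i ⊆ Qfam O i := fun m => (hbase m).2.1
  set A : ℕ → Set X := fun i => ⋂ m, seq m i with hA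
  have hAsub : ∀ m i, A i ⊆ seq m i := fun m i => Set.iInter_subset _ m
  have hAQ : ∀ i, A i ⊆ Qfam O i := fun i => (hAsub 0 i).trans (hAseqQ 0 i)
  refine ⟨A, fun i => (hAQ i).trans (Qfam_subset O i), ?_, ?_, ?_, ?_⟩
  · -- covering by pigeonhole
    intro x hx
    have hhx : 0 < hdep O x := (hdep_pos_iff hOo x).mpr (hOcov hx)
    have hFx : {i | x ∈ Qfam O i}.Finite := Qfam_finite_mem hhx
    by_contra hc
    push_neg at hc
    -- each S i := {m | x ∈ seq m i} is finite
    have hSfin : ∀ i, {m : ℕ | x ∈ seq m i}.Finite := by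
      intro i
      by_contra hinf
      refine hc i ?_
      refine Set.mem_iInter.mpr fun m => ?_
      have : ¬ {m : ℕ | x ∈ seq m i} ⊆ Set.Iio (m + 1) := by
        intro hsub
        exact hinf ((Set.finite_Iio (m+1)).subset hsub)
      obtain ⟨m', hm', hm'2⟩ := Set.not_subset.mp this
      simp only [Set.mem_Iio, not_lt] at hm'2
      exact hmono m m' (by omega) i hm'
    have hcovall : (Set.univ : Set ℕ) ⊆ ⋃ i ∈ {i | x ∈ Qfam O i}, {m : ℕ | x ∈ seq m i} := by
      intro m _
      obtain ⟨i, hi⟩ := Set.mem_iUnion.mp ((hbase m).2.2 hx)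
      exact Set.mem_biUnion (hAseqQ m i hi) hi
    have : (Set.univ : Set ℕ).Finite :=
      ((hFx.biUnion (fun i _ => hSfin i))).subset hcovall
    exact Set.infinite_univ this
  · -- order
    intro x hx
    have hhx : 0 < hdep O x := (hdep_pos_iff hOo x).mpr (hOcov hx)
    have hfin : {i | x ∈ A i}.Finite :=
      (Qfam_finite_mem hhx).subset (fun i hi => hAQ i hi)
    refine ⟨hfin, ?_⟩
    obtain ⟨N, hN⟩ := ENNReal.exists_inv_two_pow_lt hhx.ne'
    have hsub : {i | x ∈ A i} ⊆ {i | x ∈ seq (N+1) i} := fun i hi => hAsub (N+1) i hi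
    have hfin2 : {i | x ∈ seq (N+1) i}.Finite :=
      (Qfam_finite_mem hhx).subset (fun i hi => hAseqQ (N+1) i hi)
    exact le_trans (Set.ncard_le_ncard hsub hfin2) ((hspec N).2.1 x hx hN.le)
  · -- separation positivity
    intro x hx j hxj
    have : ∃ m, x ∉ seq m j := by
      by_contra hc
      push_neg at hc
      exact hxj (Set.mem_iInter.mpr hc)
    obtain ⟨m, hm⟩ := this
    have hncl : x ∉ closure (seq (m+1) j) := by
      intro hcl
      exact hm ((hspec m).2.2.2 j x hx hcl)
    have hsubcl : closure (A j) ⊆ closure (seq (m+1) j) :=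
      closure_mono (hAsub (m+1) j)
    have : x ∉ closure (A j) := fun h => hncl (hsubcl h)
    rw [pos_iff_ne_zero]
    intro h0
    exact this (EMetric.mem_closure_iff_infEdist_zero.mpr h0)
  · -- uniform tail bound
    intro x hx
    have hhx : 0 < hdep O x := (hdep_pos_iff hOo x).mpr (hOcov hx)
    set thr : ℝ≥0∞ := hdep O x / 2 / 2 with hthr
    have hhalf : hdep O x / 2 ≠ 0 := by
      intro hh
      rcases ENNReal.div_eq_zero_iff.mp hh with hh1 | hh1
      · exact hhx.ne' hh1
      · norm_num at hh1
    have hthr0 : thr ≠ 0 := by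
      intro hh
      rcases ENNReal.div_eq_zero_iff.mp hh with hh1 | hh1
      · exact hhalf hh1
      · norm_num at hh1
    obtain ⟨N, hN⟩ := ENNReal.exists_inv_two_pow_lt hthr0
    set K : Set X := {y | hdep O y ≤ hdep O x / 2} with hK
    have hKc : IsClosed K :=
      isClosed_le_of_lip (hdep_lip O) (Lip1.const _) (fun _ => hdep_div_ne_top O 2 (by norm_num) x)
    have hxK : x ∉ K := by
      simp only [hK, Set.mem_setOf_eq, not_le]
      exact ENNReal.half_lt_self hhx.ne' (hdep_ne_top O x)
    have hεpos : 0 < infEdist x K := by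
      rw [pos_iff_ne_zero]
      intro h0
      exact hxK (hKc.closure_eq ▸ EMetric.mem_closure_iff_infEdist_zero.mpr h0)
    refine ⟨N, infEdist x K, hεpos, ?_⟩
    intro j hj
    have hQK : Qfam O j ⊆ K := by
      intro y hy
      have h1 : hdep O y / 2 < 2⁻¹ ^ j := mem_Qfam_bound hy
      have h2 : (2⁻¹:ℝ≥0∞) ^ j ≤ 2⁻¹ ^ N := pow_half_le_of_le hj
      have h3 : hdep O y / 2 < thr := lt_of_lt_of_le (h1.trans_le h2) hN.le
      have h4 : hdep O y < thr * 2 := by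
        rw [ENNReal.div_lt_iff (by norm_num) (by norm_num)] at h3
        exact h3
      have h5 : thr * 2 = hdep O x / 2 := by
        rw [hthr]
        rw [ENNReal.div_mul_cancel (by norm_num) (by norm_num)]
      simp only [hK, Set.mem_setOf_eq]
      rw [← h5]
      exact h4.le
    have hAK : A j ⊆ K := (hAQ j).trans hQK
    exact EMetric.infEdist_anti hAK

/-! ### coloring -/

/-- capped distance to `A j`. -/
def mbar (A : ℕ → Set X) (j : ℕ) (y : X) : ℝ≥0∞ := min 1 (infEdist y (A j))

lemma mbar_lip (A : ℕ → Set X) (j : ℕ) : Lip1 (mbar A j) :=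
  Lip1.min (Lip1.const 1) (fun x y => infEdist_le_infEdist_add_edist)

lemma mbar_le_one (A : ℕ → Set X) (j : ℕ) (y : X) : mbar A j y ≤ 1 := min_le_left _ _

lemma mbar_eq_zero_of_mem {A : ℕ → Set X} {j : ℕ} {y : X} (h : y ∈ A j) : mbar A j y = 0 := by
  simp [mbar, EMetric.infEdist_zero_of_mem h]
  exact EMetric.infEdist_zero_of_mem h

/-- the sup part. -/
def Sfun (A : ℕ → Set X) (σ : Finset ℕ) (y : X) : ℝ≥0∞ := σ.sup fun i => mbar A i y

/-- the inf part (over indices not in `σ`). -/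
def Ifun (A : ℕ → Set X) (σ : Finset ℕ) (y : X) : ℝ≥0∞ :=
  ⨅ j : {j : ℕ // j ∉ σ}, mbar A (↑j) y

lemma le_Sfun (A : ℕ → Set X) {σ : Finset ℕ} {i : ℕ} (hi : i ∈ σ) (y : X) :
    mbar A i y ≤ Sfun A σ y := Finset.le_sup (f := fun i => mbar A i y) hi

lemma Ifun_le (A : ℕ → Set X) {σ : Finset ℕ} {j : ℕ} (hj : j ∉ σ) (y : X) :
    Ifun A σ y ≤ mbar A j y := iInf_le (fun j : {j : ℕ // j ∉ σ} => mbar A (↑j) y) ⟨j, hj⟩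

lemma Sfun_lip (A : ℕ → Set X) (σ : Finset ℕ) : Lip1 (Sfun A σ) := by
  intro x y
  refine Finset.sup_le fun i hi => ?_
  exact (mbar_lip A i x y).trans (add_le_add_left (le_Sfun A hi y) _)

lemma Sfun_ne_top (A : ℕ → Set X) (σ : Finset ℕ) (y : X) : Sfun A σ y ≠ ⊤ := by
  refine ((Finset.sup_le fun i _ => mbar_le_one A i y).trans_lt one_lt_top).ne

lemma Ifun_lip (A : ℕ → Set X) (σ : Finset ℕ) : Lip1 (Ifun A σ) := by
  intro x y
  rw [Ifun, Ifun, ENNReal.iInf_add]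
  refine le_iInf fun j => ?_
  exact (iInf_le _ j).trans (mbar_lip A (↑j) x y)

/-- the colored piece for a finite index set. -/
def Vpiece (O A : ℕ → Set X) (σ : Finset ℕ) : Set X :=
  {y | (∀ i ∈ σ, y ∈ O i) ∧ Sfun A σ y < Ifun A σ y}

lemma Vpiece_isOpen (O A : ℕ → Set X) (hOo : ∀ i, IsOpen (O i)) (σ : Finset ℕ) :
    IsOpen (Vpiece O A σ) := by
  have : Vpiece O A σ = (⋂ i ∈ σ, O i) ∩ {y | Sfun A σ y < Ifun A σ y} := by
    ext y
    simp [Vpiece, Set.mem_iInter]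
  rw [this]
  exact (isOpen_biInter_finset fun i _ => hOo i).inter
    (isOpen_lt_of_lip (Sfun_lip A σ) (Ifun_lip A σ) (Sfun_ne_top A σ))

lemma Vpiece_subset (O A : ℕ → Set X) {σ : Finset ℕ} {i : ℕ} (hi : i ∈ σ) :
    Vpiece O A σ ⊆ O i := fun y hy => hy.1 i hi

lemma Vpiece_disjoint (O A : ℕ → Set X) {σ σ' : Finset ℕ} (hne : σ ≠ σ')
    (hcard : σ.card = σ'.card) : Disjoint (Vpiece O A σ) (Vpiece O A σ') := by
  classical
  rw [Set.disjoint_left]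
  intro y hy hy'
  have h1 : (σ \ σ').Nonempty := by
    rw [Finset.sdiff_nonempty]
    intro hsub
    exact hne (Finset.eq_of_subset_of_card_le hsub hcard.ge)
  have h2 : (σ' \ σ).Nonempty := by
    rw [Finset.sdiff_nonempty]
    intro hsub
    exact hne (Finset.eq_of_subset_of_card_le hsub hcard.le).symm
  obtain ⟨i, hi⟩ := h1
  obtain ⟨i', hi'⟩ := h2
  rw [Finset.mem_sdiff] at hi hi'
  have k1 : mbar A i y < mbar A i' y := by
    calc mbar A i y ≤ Sfun A σ y := le_Sfun A hi.1 y
      _ < Ifun A σ y := hy.2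
      _ ≤ mbar A i' y := Ifun_le A hi'.2 y
  have k2 : mbar A i' y < mbar A i y := by
    calc mbar A i' y ≤ Sfun A σ' y := le_Sfun A hi'.1 y
      _ < Ifun A σ' y := hy'.2
      _ ≤ mbar A i y := Ifun_le A hi.2 y
  exact lt_asymm k1 k2

lemma coloring {T : Set X} {d : ℕ} (O A : ℕ → Set X)
    (hOo : ∀ i, IsOpen (O i))
    (hAO : ∀ i, A i ⊆ O i)
    (hAcov : ∀ x ∈ T, ∃ i, x ∈ A i)
    (hAord : ∀ x ∈ T, ({i | x ∈ A i}).Finite ∧ {i | x ∈ A i}.ncard ≤ d + 1)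
    (hApos : ∀ x ∈ T, ∀ j, x ∉ A j → 0 < infEdist x (A j))
    (hAtail : ∀ x ∈ T, ∃ (N : ℕ) (ε : ℝ≥0∞), 0 < ε ∧ ∀ j, N ≤ j → ε ≤ infEdist x (A j)) :
    ∃ G : ℕ → Set (Set X),
      (∀ c, (∀ V ∈ G c, IsOpen V) ∧ (G c).Pairwise Disjoint ∧
        ∀ V ∈ G c, c ≤ d ∧ ∃ i, V ⊆ O i) ∧
      T ⊆ ⋃ c, ⋃₀ G c := by
  classical
  refine ⟨fun c => {V | ∃ σ : Finset ℕ, σ.card = c + 1 ∧ c ≤ d ∧ V = Vpiece O A σ},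
    fun c => ⟨?_, ?_, ?_⟩, ?_⟩
  · rintro V ⟨σ, -, -, rfl⟩
    exact Vpiece_isOpen O A hOo σ
  · rintro V ⟨σ, hσc, -, rfl⟩ V' ⟨σ', hσ'c, -, rfl⟩ hne
    have hσσ' : σ ≠ σ' := by
      rintro rfl; exact hne rfl
    exact Vpiece_disjoint O A hσσ' (hσc.trans hσ'c.symm)
  · rintro V ⟨σ, hσc, hσd, rfl⟩
    have hσne : σ.Nonempty := by
      rw [← Finset.card_pos, hσc]; omega
    obtain ⟨i, hi⟩ := hσne
    exact ⟨hσd, i, Vpiece_subset O A hi⟩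
  · intro x hx
    obtain ⟨hfin, hcard⟩ := hAord x hx
    set σx : Finset ℕ := hfin.toFinset with hσx
    have hmem : ∀ i, i ∈ σx ↔ x ∈ A i := fun i => hfin.mem_toFinset
    have hσxcard : σx.card = {i | x ∈ A i}.ncard := (Set.ncard_eq_toFinset_card _ hfin).symm
    have hσxne : σx.Nonempty := by
      obtain ⟨i, hi⟩ := hAcov x hx
      exact ⟨i, (hmem i).mpr hi⟩
    have hcpos : 1 ≤ σx.card := Finset.card_pos.mpr hσxne
    have hcard' : σx.card ≤ d + 1 := by rw [hσxcard]; exact hcard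
    refine Set.mem_iUnion.mpr ⟨σx.card - 1,
      Set.mem_sUnion.mpr ⟨Vpiece O A σx, ⟨σx, by omega, by omega, rfl⟩, ?_⟩⟩
    refine ⟨fun i hi => hAO i ((hmem i).mp hi), ?_⟩
    -- Sfun = 0
    have hS : Sfun A σx x = 0 := by
      refine le_antisymm (Finset.sup_le fun i hi => ?_) zero_le
      rw [mbar_eq_zero_of_mem ((hmem i).mp hi)]
    -- Ifun > 0
    obtain ⟨N, ε, hε, htail⟩ := hAtail x hx
    set F : Finset ℕ := (Finset.range N).filter (fun j => j ∉ σx) with hF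
    set c : ℝ≥0∞ := min (min 1 ε) (F.inf fun j => mbar A j x) with hc
    have hcpos' : 0 < c := by
      rw [hc, lt_min_iff, lt_min_iff]
      refine ⟨⟨one_pos, hε⟩, ?_⟩
      rw [Finset.lt_inf_iff (by exact lt_top_iff_ne_top.mpr (by simp) : (0:ℝ≥0∞) < ⊤)]
      intro j hj
      rw [hF, Finset.mem_filter] at hj
      have hxj : x ∉ A j := fun h => hj.2 ((hmem j).mpr h)
      rw [mbar, lt_min_iff]
      exact ⟨one_pos, hApos x hx j hxj⟩
    have hIc : c ≤ Ifun A σx x := by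
      rw [Ifun]
      refine le_iInf ?_
      rintro ⟨j, hj⟩
      by_cases hjN : j < N
      · have hjF : j ∈ F := by
          rw [hF, Finset.mem_filter, Finset.mem_range]
          exact ⟨hjN, hj⟩
        exact (min_le_right _ _).trans (Finset.inf_le hjF)
      · have : ε ≤ infEdist x (A j) := htail j (by omega)
        refine (min_le_left _ _).trans ?_
        rw [mbar, le_min_iff]
        exact ⟨min_le_left _ _, (min_le_right _ _).trans this⟩
    rw [hS]
    exact lt_of_lt_of_le hcpos' hIc

/-! ### the key lemma -/

lemma key_lemma [TopologicalSpace.SeparableSpace X] [Nonempty X]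
    {T : Set X} {d : ℕ} (hT : CovShrink T d) (H : ℕ → Set (Set X))
    (hH : ∀ j, (∀ U ∈ H j, IsOpen U) ∧ ∀ x : X, ∃ U ∈ H j, x ∈ U) :
    ∃ G : ℕ → Set (Set X),
      (∀ j, (∀ V ∈ G j, IsOpen V) ∧ (G j).Pairwise Disjoint ∧
        ∀ V ∈ G j, ∃ U ∈ H j, V ⊆ U) ∧
      T ⊆ ⋃ j, ⋃₀ G j := by
  classical
  haveI : SecondCountableTopology X := UniformSpace.secondCountable_of_separable X
  -- common refinement of H 0, ..., H d
  set 𝓖 : Set (Set X) :=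
    {S | ∃ g : ℕ → Set X, (∀ j, j ≤ d → g j ∈ H j) ∧ S = ⋂ j ∈ Finset.range (d+1), g j}
    with h𝓖
  have h𝓖o : ∀ S ∈ 𝓖, IsOpen S := by
    rintro S ⟨g, hg, rfl⟩
    exact isOpen_biInter_finset fun j hj =>
      (hH j).1 _ (hg j (by simpa [Finset.mem_range] using Nat.lt_succ_iff.mp (Finset.mem_range.mp hj)))
  have h𝓖cov : ⋃₀ 𝓖 = Set.univ := by
    rw [Set.eq_univ_iff_forall]
    intro x
    have hx : ∀ j, ∃ U ∈ H j, x ∈ U := fun j => (hH j).2 x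
    choose g hg1 hg2 using hx
    refine Set.mem_sUnion.mpr ⟨⋂ j ∈ Finset.range (d+1), g j, ⟨g, fun j _ => hg1 j, rfl⟩, ?_⟩
    exact Set.mem_biInter fun j _ => hg2 j
  obtain ⟨𝓖₀, h𝓖₀c, h𝓖₀sub, h𝓖₀cov⟩ := TopologicalSpace.isOpen_sUnion_countable 𝓖 h𝓖o
  rw [h𝓖cov] at h𝓖₀cov
  -- enumerate
  have h𝓖₁c : (insert (∅ : Set X) 𝓖₀).Countable := h𝓖₀c.insert ∅
  obtain ⟨O, hO⟩ := h𝓖₁c.exists_eq_range (Set.insert_nonempty _ _)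
  have hOmem : ∀ i, O i = ∅ ∨ O i ∈ 𝓖₀ := by
    intro i
    have : O i ∈ insert (∅ : Set X) 𝓖₀ := by rw [hO]; exact Set.mem_range_self i
    rcases this with h | h
    · exact Or.inl h
    · exact Or.inr h
  have hOo : ∀ i, IsOpen (O i) := by
    intro i
    rcases hOmem i with h | h
    · rw [h]; exact isOpen_empty
    · exact h𝓖o _ (h𝓖₀sub h)
  have hOcov : T ⊆ ⋃ i, O i := by
    intro x _
    have : x ∈ ⋃₀ 𝓖₀ := h𝓖₀cov.symm ▸ Set.mem_univ x
    obtain ⟨S, hS, hxS⟩ := this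
    have : S ∈ Set.range O := by rw [← hO]; exact Set.mem_insert_of_mem _ hS
    obtain ⟨i, rfl⟩ := this
    exact Set.mem_iUnion.mpr ⟨i, hxS⟩
  obtain ⟨A, hAO, hAcov, hAord, hApos, hAtail⟩ := exists_good_A hT O hOo hOcov
  obtain ⟨G, hG, hGcov⟩ := coloring (T := T) (d := d) O A hOo hAO hAcov hAord hApos hAtail
  refine ⟨G, fun c => ⟨(hG c).1, (hG c).2.1, ?_⟩, hGcov⟩
  intro V hV
  obtain ⟨hσd, i, hVi⟩ := (hG c).2.2 V hV
  rcases hOmem i with h | h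
  · obtain ⟨U, hU, -⟩ := (hH c).2 (Classical.arbitrary X)
    exact ⟨U, hU, by rw [h] at hVi; exact hVi.trans (Set.empty_subset U)⟩
  · obtain ⟨g, hg, hOi⟩ := h𝓖₀sub h
    refine ⟨g c, hg c hσd, hVi.trans ?_⟩
    rw [hOi]
    exact Set.biInter_subset_of_mem
      (show c ∈ Finset.range (d+1) from Finset.mem_range.mpr (by omega))


/-! ### final assembly -/

lemma scSel_mono {𝓐 𝓑 : Set (Set (Set X))} (hsub : 𝓑 ⊆ 𝓐) (h : ScSel X 𝓐) : ScSel X 𝓑 :=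
  fun A hA => h A fun n => hsub (hA n)

lemma scSel_of_isEmpty [IsEmpty X] (𝓐 : Set (Set (Set X))) : ScSel X 𝓐 := by
  intro A hA
  refine ⟨fun _ => ∅, fun n => ⟨?_, ?_, ?_⟩, fun x => (IsEmpty.false x).elim⟩
  · intro V hV; exact absurd hV (Set.notMem_empty V)
  · exact Set.pairwise_empty _
  · intro V hV; exact absurd hV (Set.notMem_empty V)

lemma scSel_fd_to_open [TopologicalSpace.SeparableSpace X]
    (h : ScSel X {𝓤 : Set (Set X) | IsTCover (fdSets X) 𝓤}) :
    ScSel X {𝓤 : Set (Set X) | IsOpenCover 𝓤} := by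
  classical
  cases isEmpty_or_nonempty X with
  | inl hX => exact scSel_of_isEmpty _
  | inr hX =>
  intro A hA
  simp only [Set.mem_setOf_eq] at hA
  -- the fed covers
  set W : ℕ → Set (Set X) := fun n => {Wset | ∃ F : ℕ → Set (Set X),
    (∀ j, (∀ V ∈ F j, IsOpen V) ∧ (F j).Pairwise Disjoint ∧
      ∀ V ∈ F j, ∃ U ∈ A (Nat.pair n j), V ⊆ U) ∧ Wset = ⋃ j, ⋃₀ F j} with hWdef
  have hW : ∀ n, W n ∈ {𝓤 : Set (Set X) | IsTCover (fdSets X) 𝓤} := by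
    intro n
    refine ⟨?_, ?_, ?_⟩
    · -- open
      rintro U ⟨F, hF, rfl⟩
      exact isOpen_iUnion fun j => isOpen_sUnion fun V hV => (hF j).1 V hV
    · -- covers points
      intro x
      obtain ⟨U, hU, hxU⟩ := (hA (Nat.pair n 0)).2 x
      set F : ℕ → Set (Set X) := fun j => if j = 0 then {U} else ∅ with hF
      have hFcond : ∀ j, (∀ V ∈ F j, IsOpen V) ∧ (F j).Pairwise Disjoint ∧
          ∀ V ∈ F j, ∃ U' ∈ A (Nat.pair n j), V ⊆ U' := by
        intro j
        by_cases hj : j = 0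
        · subst hj
          simp only [hF, if_pos rfl]
          refine ⟨?_, Set.pairwise_singleton _ _, ?_⟩
          · rintro V rfl'
            have : V = U := rfl'
            rw [this]
            exact (hA (Nat.pair n 0)).1 U hU
          · rintro V rfl'
            have : V = U := rfl'
            rw [this]
            exact ⟨U, hU, le_refl _⟩
        · simp only [hF, if_neg hj]
          exact ⟨fun V hV => absurd hV (Set.notMem_empty V), Set.pairwise_empty _,
            fun V hV => absurd hV (Set.notMem_empty V)⟩
      refine ⟨⋃ j, ⋃₀ F j, ⟨F, hFcond, rfl⟩, ?_⟩
      refine Set.mem_iUnion.mpr ⟨0, Set.mem_sUnion.mpr ⟨U, ?_, hxU⟩⟩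
      simp [hF]
    · -- captures finite-dimensional sets
      intro T hT
      obtain ⟨d, hd⟩ := hT
      have hTs : CovShrink T d := covShrink_of_covDimLE hd
      obtain ⟨G, hG, hGcov⟩ := key_lemma hTs (fun j => A (Nat.pair n j))
        (fun j => ⟨(hA (Nat.pair n j)).1, (hA (Nat.pair n j)).2⟩)
      exact ⟨⋃ j, ⋃₀ G j, ⟨G, hG, rfl⟩, hGcov⟩
  obtain ⟨B, hB, hBcov⟩ := h W hW
  -- choose witnessing decompositions for the members of the B n
  have hch : ∀ (n : ℕ) (V : Set X), ∃ F : ℕ → Set (Set X),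
      V ∈ B n → ((∀ j, (∀ V' ∈ F j, IsOpen V') ∧ (F j).Pairwise Disjoint ∧
          ∀ V' ∈ F j, ∃ U ∈ A (Nat.pair n j), V' ⊆ U) ∧ V ⊆ ⋃ j, ⋃₀ F j) := by
    intro n V
    by_cases hV : V ∈ B n
    · obtain ⟨U, hU, hVU⟩ := (hB n).2.2 V hV
      obtain ⟨F, hF, rfl⟩ := hU
      exact ⟨F, fun _ => ⟨hF, hVU⟩⟩
    · exact ⟨fun _ => ∅, fun h' => absurd h' hV⟩
  choose Fw hFw using hch
  set C : ℕ → Set (Set X) := fun m =>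
    {S | ∃ V ∈ B (Nat.unpair m).1, ∃ V' ∈ Fw (Nat.unpair m).1 V (Nat.unpair m).2, S = V ∩ V'}
    with hC
  refine ⟨C, ?_, ?_⟩
  · intro m
    refine ⟨?_, ?_, ?_⟩
    · rintro S ⟨V, hV, V', hV', rfl⟩
      exact ((hB _).1 V hV).inter (((hFw _ V hV).1 _).1 V' hV')
    · rintro S1 ⟨V1, hV1, V1', hV1', rfl⟩ S2 ⟨V2, hV2, V2', hV2', rfl⟩ hne
      by_cases hVV : V1 = V2
      · subst hVV
        have hne' : V1' ≠ V2' := by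
          rintro rfl; exact hne rfl
        have hdisj : Disjoint V1' V2' := ((hFw _ V1 hV1).1 _).2.1 hV1' hV2' hne'
        exact (hdisj.mono Set.inter_subset_right Set.inter_subset_right)
      · have hdisj : Disjoint V1 V2 := (hB _).2.1 hV1 hV2 hVV
        exact (hdisj.mono Set.inter_subset_left Set.inter_subset_left)
    · rintro S ⟨V, hV, V', hV', rfl⟩
      obtain ⟨U, hU, hV'U⟩ := ((hFw _ V hV).1 _).2.2 V' hV'
      rw [Nat.pair_unpair m] at hU
      exact ⟨U, hU, Set.inter_subset_right.trans hV'U⟩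
  · intro x
    obtain ⟨n, V, hV, hxV⟩ := hBcov x
    have hx2 : x ∈ ⋃ j, ⋃₀ Fw n V j := (hFw n V hV).2 hxV
    obtain ⟨j, hj⟩ := Set.mem_iUnion.mp hx2
    obtain ⟨V', hV', hxV'⟩ := hj
    refine ⟨Nat.pair n j, V ∩ V', ?_, hxV, hxV'⟩
    refine ⟨V, ?_, V', ?_, rfl⟩
    · rw [Nat.unpair_pair]; exact hV
    · rw [Nat.unpair_pair]; exact hV'

end SCproof

end

theorem statement_15 {X : Type*} [MetricSpace X] [TopologicalSpace.SeparableSpace X] :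
    (ScSel X {𝓤 : Set (Set X) | IsOpenCover 𝓤} ↔
      ScSel X {𝓤 : Set (Set X) | IsTCover (kfdSets X) 𝓤}) ∧
    (ScSel X {𝓤 : Set (Set X) | IsOpenCover 𝓤} ↔
      ScSel X {𝓤 : Set (Set X) | IsTCover (fdSets X) 𝓤}) := by
  have hsub1 : {𝓤 : Set (Set X) | IsTCover (kfdSets X) 𝓤} ⊆ {𝓤 : Set (Set X) | IsOpenCover 𝓤} :=
    fun 𝓤 h𝓤 => ⟨h𝓤.1, h𝓤.2.1⟩
  have hsub2 : {𝓤 : Set (Set X) | IsTCover (fdSets X) 𝓤} ⊆ {𝓤 : Set (Set X) | IsOpenCover 𝓤} :=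
    fun 𝓤 h𝓤 => ⟨h𝓤.1, h𝓤.2.1⟩
  have hsub3 : {𝓤 : Set (Set X) | IsTCover (fdSets X) 𝓤} ⊆
      {𝓤 : Set (Set X) | IsTCover (kfdSets X) 𝓤} :=
    fun 𝓤 h𝓤 => ⟨h𝓤.1, h𝓤.2.1, fun T hT => h𝓤.2.2 T hT.2⟩
  constructor
  · constructor
    · intro h
      exact SCproof.scSel_mono hsub1 h
    · intro h
      exact SCproof.scSel_fd_to_open (SCproof.scSel_mono hsub3 h)
  · constructor
    · intro h
      exact SCproof.scSel_mono hsub2 h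
    · intro h
      exact SCproof.scSel_fd_to_open h
end
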